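/- arXiv:1101.0526 — 4 statements merged into one kernel-verified Lean document; each statement's English description precedes it below -/
import Mathlib

section
/- Let A = Σ aₙ zⁿ ∈ ℂ⟦z⟧ be a formal power series of finite Hadamard grade over ℂ. Then A has positive radius of convergence: there exists a real constant C > 0 such that |aₙ| ≤ C^{n+1} for all n ≥ 0. -/
open PowerSeries

/-- The Hadamard product of two formal power series: termwise product of coefficients. -/
noncomputable def hadamardMul {K : Type*} [CommRing K] (A B : PowerSeries K) : PowerSeries K :=
  PowerSeries.mk fun n => coeff n A * coeff n B

/-- A formal power series `A ∈ K⟦z⟧` is algebraic over `K(z)`: there is a nonzero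
polynomial `P ∈ K[z][y]` with `P(A) = 0`. -/
def IsAlgebraicPS {K : Type*} [CommRing K] (A : PowerSeries K) : Prop :=
  ∃ P : Polynomial (Polynomial K), P ≠ 0 ∧
    Polynomial.eval₂ Polynomial.coeToPowerSeries.ringHom A P = 0

/-- `A` has Hadamard grade at most `d` over `K`: it is the Hadamard product of `d`
formal power series, each algebraic over `K(z)`. -/
def HadamardGradeLe {K : Type*} [CommRing K] (A : PowerSeries K) (d : ℕ) : Prop :=
  ∃ B : Fin d → PowerSeries K, (∀ i, IsAlgebraicPS (B i)) ∧
    ∀ n, coeff n A = ∏ i, coeff n (B i)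

/-- A formal power series `A ∈ K⟦z⟧` is D-finite: there are polynomials `p₀, …, p_m`,
not all zero, with `p_m A⁽ᵐ⁾ + ⋯ + p₁ A' + p₀ A = 0`. -/
def IsDFinitePS {K : Type*} [CommRing K] (A : PowerSeries K) : Prop :=
  ∃ (m : ℕ) (p : Fin (m + 1) → Polynomial K), (∃ i, p i ≠ 0) ∧
    ∑ i : Fin (m + 1), ((p i : PowerSeries K) * (⇑(PowerSeries.derivative K))^[i] A) = 0

/-- A formal power series is rational: `Q · A = P` with `Q(0) ≠ 0`. -/
def IsRationalPS {K : Type*} [CommRing K] (A : PowerSeries K) : Prop :=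
  ∃ P Q : Polynomial K, Q.coeff 0 ≠ 0 ∧ (Q : PowerSeries K) * A = (P : PowerSeries K)

namespace HadAux
open Finset

noncomputable def u (i : ℕ) : ℝ := 1 / ((i : ℝ) + 1) ^ 2

lemma u_pos (i : ℕ) : 0 < u i := by unfold u; positivity

lemma u_le_one (i : ℕ) : u i ≤ 1 := by
  unfold u
  rw [div_le_one (by positivity)]
  nlinarith [Nat.cast_nonneg (α := ℝ) i]

lemma u_anti {i j : ℕ} (h : i ≤ j) : u j ≤ u i := by
  unfold u
  have : (i : ℝ) ≤ j := by exact_mod_cast h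
  apply div_le_div_of_nonneg_left (by norm_num) (by positivity)
  nlinarith

lemma u_four {i m : ℕ} (h : m + 1 ≤ 2 * (i + 1)) : u i ≤ 4 * u m := by
  unfold u
  have h' : (m : ℝ) + 1 ≤ 2 * ((i : ℝ) + 1) := by exact_mod_cast h
  rw [div_le_iff₀ (by positivity)]
  have : ((m : ℝ) + 1) ^ 2 ≤ 4 * ((i : ℝ) + 1) ^ 2 := by nlinarith [Nat.cast_nonneg (α := ℝ) m]
  calc (1 : ℝ) = ((m : ℝ) + 1)^2 / ((m : ℝ)+1)^2 := by rw [div_self (by positivity)]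
    _ ≤ (4 * ((i:ℝ)+1)^2) / ((m:ℝ)+1)^2 := by gcongr
    _ = 4 * (1 / ((m:ℝ)+1)^2) * ((i:ℝ)+1)^2 := by ring

lemma u_sum (m : ℕ) : ∑ i ∈ range m, u i ≤ 2 := by
  have key : ∀ m : ℕ, 1 ≤ m → ∑ i ∈ range m, u i ≤ 2 - 1 / (m : ℝ) := by
    intro m hm
    induction m with
    | zero => omega
    | succ k ih =>
      rcases Nat.eq_or_lt_of_le hm with h1 | h1
      · simp [← h1, u]; norm_num
      · have hk : 1 ≤ k := by omega
        have hk' : (1 : ℝ) ≤ k := by exact_mod_cast hk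
        rw [Finset.sum_range_succ]
        have : u k ≤ 1 / (k : ℝ) - 1 / ((k : ℝ) + 1) := by
          unfold u
          rw [div_sub_div _ _ (by positivity) (by positivity)]
          rw [div_le_div_iff₀ (by positivity) (by positivity)]
          ring_nf
          nlinarith
        have := ih hk
        push_cast
        linarith
  rcases Nat.eq_zero_or_pos m with h | h
  · simp [h]
  · have := key m h
    have : (0:ℝ) < m := by exact_mod_cast h
    have h2 : 0 ≤ 1 / (m:ℝ) := by positivity
    linarith [key m h]


lemma u_conv (m : ℕ) : ∑ p ∈ antidiagonal m, u p.1 * u p.2 ≤ 16 * u m := by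
  have step : ∀ p ∈ antidiagonal m, u p.1 * u p.2 ≤ 4 * u m * (u p.1 + u p.2) := by
    rintro ⟨i, j⟩ hp
    rw [Finset.HasAntidiagonal.mem_antidiagonal] at hp
    rcases le_total i j with h | h
    · have h4 : u j ≤ 4 * u m := u_four (by omega)
      have := u_pos i; have := u_pos j
      calc u i * u j ≤ u i * (4 * u m) := by nlinarith
        _ ≤ 4 * u m * (u i + u j) := by nlinarith [u_pos m]
    · have h4 : u i ≤ 4 * u m := u_four (by omega)
      have := u_pos i; have := u_pos j
      calc u i * u j ≤ (4 * u m) * u j := by nlinarith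
        _ ≤ 4 * u m * (u i + u j) := by nlinarith [u_pos m]
  calc ∑ p ∈ antidiagonal m, u p.1 * u p.2
      ≤ ∑ p ∈ antidiagonal m, 4 * u m * (u p.1 + u p.2) := Finset.sum_le_sum step
    _ = 4 * u m * ((∑ p ∈ antidiagonal m, u p.1) + ∑ p ∈ antidiagonal m, u p.2) := by
        rw [← Finset.sum_add_distrib, Finset.mul_sum]
    _ ≤ 16 * u m := by
        have h1 : ∑ p ∈ antidiagonal m, u p.1 = ∑ i ∈ range (m+1), u i := by
          rw [Finset.Nat.sum_antidiagonal_eq_sum_range_succ_mk]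
        have h2 : ∑ p ∈ antidiagonal m, u p.2 = ∑ i ∈ range (m+1), u i := by
          rw [Finset.Nat.sum_antidiagonal_eq_sum_range_succ_mk]
          rw [← Finset.sum_range_reflect]
          apply Finset.sum_congr rfl
          intro i hi; simp only [Finset.mem_range] at hi
          congr 1; omega
        rw [h1, h2]
        have := u_sum (m+1); have := u_pos m
        nlinarith

/-- coefficient bound predicate -/
def CB (M f : ℝ) (F : PowerSeries ℂ) : Prop :=
  ∀ i : ℕ, ‖PowerSeries.coeff i F‖ ≤ f * u i * M ^ i

lemma CB.mono {M f g : ℝ} {F : PowerSeries ℂ} (h : CB M f F) (hfg : f ≤ g) (hM : 0 ≤ M) :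
    CB M g F := by
  intro i
  refine (h i).trans ?_
  have h1 := (u_pos i).le
  have h2 : (0:ℝ) ≤ M ^ i := by positivity
  exact mul_le_mul_of_nonneg_right (mul_le_mul_of_nonneg_right hfg h1) h2

lemma CB.mul {M f g : ℝ} {F G : PowerSeries ℂ} (hM : 1 ≤ M) (hf : 0 ≤ f) (hg : 0 ≤ g)
    (hF : CB M f F) (hG : CB M g G) : CB M (16 * f * g) (F * G) := by
  intro m
  rw [PowerSeries.coeff_mul]
  have hM0 : (0:ℝ) ≤ M := by linarith
  calc ‖∑ p ∈ antidiagonal m, PowerSeries.coeff p.1 F * PowerSeries.coeff p.2 G‖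
      ≤ ∑ p ∈ antidiagonal m, ‖PowerSeries.coeff p.1 F * PowerSeries.coeff p.2 G‖ :=
        norm_sum_le _ _
    _ ≤ ∑ p ∈ antidiagonal m, f * g * (u p.1 * u p.2) * M ^ m := by
        apply Finset.sum_le_sum
        rintro ⟨i, j⟩ hp
        rw [Finset.HasAntidiagonal.mem_antidiagonal] at hp
        rw [norm_mul]
        have h1 := hF i
        have h2 := hG j
        have e : f * g * (u i * u j) * M ^ m = (f * u i * M ^ i) * (g * u j * M ^ j) := by
          rw [← hp, pow_add]; ring
        rw [e]
        have : (0:ℝ) ≤ f * u i * M ^ i := (norm_nonneg _).trans h1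
        exact mul_le_mul h1 h2 (norm_nonneg _) this
    _ = f * g * M ^ m * ∑ p ∈ antidiagonal m, u p.1 * u p.2 := by
        rw [Finset.mul_sum]; apply Finset.sum_congr rfl; intros; ring
    _ ≤ 16 * f * g * u m * M ^ m := by
        have := u_conv m
        have hMm : (0:ℝ) ≤ M ^ m := by positivity
        nlinarith [u_pos m, mul_nonneg (mul_nonneg hf hg) hMm]

lemma CB.one {M : ℝ} (hM : 1 ≤ M) : CB M 1 (1 : PowerSeries ℂ) := by
  intro i
  rw [PowerSeries.coeff_one]
  rcases Nat.eq_zero_or_pos i with h | h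
  · subst h
    simp [u]
  · rw [if_neg (by omega)]
    have := u_pos i
    have : (0:ℝ) ≤ M ^ i := by positivity
    simp only [norm_zero]
    nlinarith [u_pos i]

lemma CB.pow {M f : ℝ} {F : PowerSeries ℂ} (hM : 1 ≤ M) (hf : 0 ≤ f) (hF : CB M f F) :
    ∀ j : ℕ, CB M (16 ^ j * f ^ j) (F ^ j) := by
  intro j
  induction j with
  | zero => simpa using CB.one hM
  | succ k ih =>
    have := (CB.mul hM (by positivity) hf ih hF)
    rw [pow_succ F]
    refine this.mono (le_of_eq ?_) (by linarith)
    ring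


noncomputable abbrev rho : Polynomial ℂ →+* PowerSeries ℂ := Polynomial.coeToPowerSeries.ringHom

lemma mul_right_coeff_eq_zero {w : PowerSeries ℂ} {n : ℕ} (hw : ∀ j < n, PowerSeries.coeff j w = 0)
    (t : PowerSeries ℂ) : ∀ i < n, PowerSeries.coeff i (t * w) = 0 := by
  intro i hi
  rw [PowerSeries.coeff_mul]
  apply Finset.sum_eq_zero
  rintro ⟨a, b⟩ hp
  rw [Finset.HasAntidiagonal.mem_antidiagonal] at hp
  have : b < n := by omega
  rw [hw b this, mul_zero]

lemma coeff_mul_single {D w : PowerSeries ℂ} {n v : ℕ}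
    (hw : ∀ j < n, PowerSeries.coeff j w = 0)
    (hD : ∀ i < v, PowerSeries.coeff i D = 0) :
    PowerSeries.coeff (v + n) (D * w) = PowerSeries.coeff v D * PowerSeries.coeff n w := by
  rw [PowerSeries.coeff_mul]
  apply Finset.sum_eq_single (v, n)
  · rintro ⟨a, b⟩ hp hne
    rw [Finset.HasAntidiagonal.mem_antidiagonal] at hp
    rcases lt_trichotomy a v with h | h | h
    · rw [hD a h, zero_mul]
    · exfalso; apply hne; subst h; simp at hp ⊢; omega
    · have : b < n := by omega
      rw [hw b this, mul_zero]
  · intro hmem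
    exfalso; apply hmem; rw [Finset.HasAntidiagonal.mem_antidiagonal]

/-- The key linear recurrence satisfied by coefficients of an algebraic power series. -/
lemma rec_step (A : PowerSeries ℂ) (P : Polynomial (Polynomial ℂ)) (v n : ℕ)
    (hann : Polynomial.eval₂ rho A P = 0)
    (hGlow : ∀ j < v, PowerSeries.coeff j (Polynomial.eval₂ rho A P.derivative) = 0)
    (hvn : v < n) :
    PowerSeries.coeff v (Polynomial.eval₂ rho A P.derivative) * PowerSeries.coeff n A
      = - PowerSeries.coeff (v + n)
          ((P.map rho).eval ((PowerSeries.trunc n A : Polynomial ℂ) : PowerSeries ℂ)) := by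
  set G := Polynomial.eval₂ rho A P.derivative with hGdef
  set T : PowerSeries ℂ := ((PowerSeries.trunc n A : Polynomial ℂ) : PowerSeries ℂ) with hTdef
  set w : PowerSeries ℂ := A - T with hwdef
  set Q : Polynomial (PowerSeries ℂ) := P.map rho with hQdef
  have hTco : ∀ i : ℕ, PowerSeries.coeff i T
      = if i < n then PowerSeries.coeff i A else 0 := by
    intro i
    rw [hTdef, Polynomial.coeff_coe, PowerSeries.coeff_trunc]
  have hw : ∀ j < n, PowerSeries.coeff j w = 0 := by
    intro j hj
    rw [hwdef, map_sub, hTco, if_pos hj, sub_self]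
  have hwn : PowerSeries.coeff n w = PowerSeries.coeff n A := by
    rw [hwdef, map_sub, hTco, if_neg (by omega), sub_zero]
  have hQA : Q.eval A = 0 := by
    rw [hQdef, Polynomial.eval_map]
    exact hann
  have hQG : Q.derivative.eval A = G := by
    rw [hQdef, Polynomial.derivative_map, Polynomial.eval_map]
  -- D agrees with G below n
  have hDG : ∀ i < n, PowerSeries.coeff i (Q.derivative.eval T) = PowerSeries.coeff i G := by
    intro i hi
    obtain ⟨t, ht⟩ := Polynomial.sub_dvd_eval_sub T A Q.derivative
    have hTA : T - A = -w := by rw [hwdef]; ring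
    have hcoeff : ∀ j < n, PowerSeries.coeff j (-w) = 0 := by
      intro j hj; rw [map_neg, hw j hj, neg_zero]
    have : Q.derivative.eval T - Q.derivative.eval A = t * (-w) := by
      rw [ht, hTA]; ring
    have h0 := mul_right_coeff_eq_zero hcoeff t i hi
    rw [← this, map_sub, hQG] at h0
    exact sub_eq_zero.mp h0
  obtain ⟨k, hk⟩ := Q.binomExpansion T w
  have hTw : T + w = A := by rw [hwdef]; ring
  rw [hTw, hQA] at hk
  have hco := congrArg (PowerSeries.coeff (v + n)) hk
  rw [map_zero, map_add, map_add] at hco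
  have h2 : PowerSeries.coeff (v + n) (Q.derivative.eval T * w)
      = PowerSeries.coeff v G * PowerSeries.coeff n A := by
    rw [coeff_mul_single hw (fun i hiv => by
      rw [hDG i (lt_trans hiv hvn)]; exact hGlow i hiv)]
    rw [hDG v hvn, hwn]
  have h3 : PowerSeries.coeff (v + n) (k * w ^ 2) = 0 := by
    have e : k * w ^ 2 = (k * w) * w := by ring
    rw [e, coeff_mul_single hw (fun i hiv => mul_right_coeff_eq_zero hw k i (lt_trans hiv hvn))]
    rw [mul_right_coeff_eq_zero hw k v hvn, zero_mul]
  rw [h2, h3] at hco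
  linear_combination -hco


set_option maxHeartbeats 2000000 in
lemma core (A : PowerSeries ℂ) (P : Polynomial (Polynomial ℂ)) (v : ℕ)
    (hann : Polynomial.eval₂ rho A P = 0)
    (hGlow : ∀ j < v, PowerSeries.coeff j (Polynomial.eval₂ rho A P.derivative) = 0)
    (hc : PowerSeries.coeff v (Polynomial.eval₂ rho A P.derivative) ≠ 0)
    (hA0 : ∀ i ≤ v, PowerSeries.coeff i A = 0) :
    ∃ M : ℝ, 1 ≤ M ∧ ∀ n : ℕ, ‖PowerSeries.coeff n A‖ ≤ M ^ n := by
  classical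
  have hcn : 0 < ‖PowerSeries.coeff v (Polynomial.eval₂ rho A P.derivative)‖ :=
    norm_pos_iff.mpr hc
  set cnorm : ℝ := ‖PowerSeries.coeff v (Polynomial.eval₂ rho A P.derivative)‖ with hcdef
  set d : ℕ := P.natDegree with hddef
  set Dz : ℕ := (Finset.range (d+1)).sup (fun j => (P.coeff j).natDegree) with hDzdef
  have hDz : ∀ j : ℕ, (P.coeff j).natDegree ≤ Dz := by
    intro j
    rcases le_or_gt j d with h | h
    · exact Finset.le_sup (f := fun j => (P.coeff j).natDegree) (Finset.mem_range.mpr (by omega))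
    · rw [Polynomial.coeff_eq_zero_of_natDegree_lt h]
      simp
  -- the coefficient bound B
  set B : ℝ := 1 + ∑ j ∈ Finset.range (d+1),
      ∑ k ∈ Finset.range ((P.coeff j).natDegree + 1), ‖(P.coeff j).coeff k‖ with hBdef
  have hBsum : (0:ℝ) ≤ ∑ j ∈ Finset.range (d+1),
      ∑ k ∈ Finset.range ((P.coeff j).natDegree + 1), ‖(P.coeff j).coeff k‖ :=
    Finset.sum_nonneg fun j _ => Finset.sum_nonneg fun k _ => norm_nonneg _
  have hB1 : 1 ≤ B := by rw [hBdef]; linarith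
  have hB0 : 0 < B := by linarith
  have hB : ∀ j k : ℕ, ‖(P.coeff j).coeff k‖ ≤ B := by
    intro j k
    rcases le_or_gt j d with hj | hj
    · rcases le_or_gt k ((P.coeff j).natDegree) with hk | hk
      · have h1 : ‖(P.coeff j).coeff k‖
            ≤ ∑ k ∈ Finset.range ((P.coeff j).natDegree + 1), ‖(P.coeff j).coeff k‖ :=
          Finset.single_le_sum (fun k _ => norm_nonneg _) (Finset.mem_range.mpr (by omega))
        have h2 : ∑ k ∈ Finset.range ((P.coeff j).natDegree + 1), ‖(P.coeff j).coeff k‖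
            ≤ ∑ j ∈ Finset.range (d+1),
              ∑ k ∈ Finset.range ((P.coeff j).natDegree + 1), ‖(P.coeff j).coeff k‖ :=
          Finset.single_le_sum
            (f := fun j => ∑ k ∈ Finset.range ((P.coeff j).natDegree + 1), ‖(P.coeff j).coeff k‖)
            (fun j _ => Finset.sum_nonneg fun k _ => norm_nonneg _) (Finset.mem_range.mpr (by omega))
        rw [hBdef]; linarith
      · rw [Polynomial.coeff_eq_zero_of_natDegree_lt hk, norm_zero]; linarith
    · rw [Polynomial.coeff_eq_zero_of_natDegree_lt hj]
      simp only [Polynomial.coeff_zero, norm_zero]; linarith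
  clear_value B
  clear hBdef hBsum
  set B' : ℝ := B * ((Dz:ℝ)+1)^2 with hB'def
  have hB'0 : 0 < B' := by rw [hB'def]; positivity
  have hB'B : ∀ i : ℕ, i ≤ Dz → B ≤ B' * u i := by
    intro i hi
    rw [hB'def]
    simp only [u]
    rw [mul_div_assoc', le_div_iff₀ (by positivity)]
    have h1 : ((i:ℝ)+1)^2 ≤ ((Dz:ℝ)+1)^2 := by
      have : (i:ℝ) ≤ (Dz:ℝ) := by exact_mod_cast hi
      nlinarith [Nat.cast_nonneg (α := ℝ) i]
    nlinarith
  clear_value B'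
  clear hB'def
  set cstar : ℝ := min 1 (cnorm / (((d:ℝ)+1) * 16^(d+1) * B')) with hcsdef
  have hcs0 : 0 < cstar :=
    lt_min one_pos (div_pos hcn (by positivity))
  have hcs1 : cstar ≤ 1 := min_le_left _ _
  have hcs2 : ((d:ℝ)+1) * 16^(d+1) * B' * cstar ≤ cnorm := by
    have h := min_le_right 1 (cnorm / (((d:ℝ)+1) * 16^(d+1) * B'))
    rw [← hcsdef, le_div_iff₀ (by positivity)] at h
    nlinarith
  clear_value cstar
  clear hcsdef
  set M : ℝ := 1 + 8*B*((Dz:ℝ)+1)*((d:ℝ)+1)/cnorm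
      + ∑ i ∈ Finset.range (v + 2*Dz + 2), (((i:ℝ)+1)^2 * ‖PowerSeries.coeff i A‖ / cstar)
      with hMdef
  have ht1 : (0:ℝ) ≤ 8*B*((Dz:ℝ)+1)*((d:ℝ)+1)/cnorm := by positivity
  have ht2 : (0:ℝ) ≤ ∑ i ∈ Finset.range (v + 2*Dz + 2),
      (((i:ℝ)+1)^2 * ‖PowerSeries.coeff i A‖ / cstar) :=
    Finset.sum_nonneg fun i _ => by positivity
  have hM1 : 1 ≤ M := by rw [hMdef]; linarith
  have hM2 : 8*B*((Dz:ℝ)+1)*((d:ℝ)+1) ≤ cnorm * M := by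
    have h : 8*B*((Dz:ℝ)+1)*((d:ℝ)+1)/cnorm ≤ M := by rw [hMdef]; linarith
    rw [div_le_iff₀ hcn] at h
    nlinarith
  have hM3 : ∀ i, i < v + 2*Dz + 2 → ((i:ℝ)+1)^2 * ‖PowerSeries.coeff i A‖ ≤ M * cstar := by
    intro i hi
    have h1 : ((i:ℝ)+1)^2 * ‖PowerSeries.coeff i A‖ / cstar
        ≤ ∑ i ∈ Finset.range (v + 2*Dz + 2),
          (((i:ℝ)+1)^2 * ‖PowerSeries.coeff i A‖ / cstar) :=
      Finset.single_le_sum (f := fun i : ℕ => ((i:ℝ)+1)^2 * ‖PowerSeries.coeff i A‖ / cstar)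
        (fun i _ => by positivity) (Finset.mem_range.mpr hi)
    have h2 : ((i:ℝ)+1)^2 * ‖PowerSeries.coeff i A‖ / cstar ≤ M := by rw [hMdef]; linarith
    rw [div_le_iff₀ hcs0] at h2
    linarith
  clear_value M
  clear hMdef ht1 ht2
  have hMpos : (0:ℝ) < M := lt_of_lt_of_le one_pos hM1
  set ε : ℝ := cstar / M ^ v with hεdef
  have hε0 : 0 < ε := by positivity
  have hε1 : ε ≤ 1 := by
    rw [hεdef, div_le_one (by positivity)]
    exact hcs1.trans (one_le_pow₀ hM1)
  have hεM : ε * M ^ v = cstar := by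
    rw [hεdef]; exact div_mul_cancel₀ _ (pow_pos hMpos v).ne'
  have hXnn : ∀ n : ℕ, (0:ℝ) ≤ ε * u n * M ^ n := fun n =>
    mul_nonneg (mul_nonneg hε0.le (u_pos n).le) (pow_nonneg hMpos.le n)
  clear_value ε
  -- main induction
  have key : ∀ n : ℕ, ‖PowerSeries.coeff n A‖ ≤ ε * u n * M ^ n := by
    intro n
    induction n using Nat.strong_induction_on with
    | _ n ih =>
    rcases lt_or_ge n (v + 2*Dz + 2) with hn | hn
    · rcases le_or_gt n v with hnv | hnv
      · rw [hA0 n hnv, norm_zero]; exact hXnn n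
      · have h3 := hM3 n hn
        have hup := u_pos n
        have hun1 : ((n:ℝ)+1)^2 * u n = 1 := by
          simp only [u]; field_simp
        have h4 := mul_le_mul_of_nonneg_right h3 hup.le
        have e1 : ‖PowerSeries.coeff n A‖ ≤ M * cstar * u n := by
          calc ‖PowerSeries.coeff n A‖
              = ((n:ℝ)+1)^2 * ‖PowerSeries.coeff n A‖ * u n := by
                rw [show ((n:ℝ)+1)^2 * ‖PowerSeries.coeff n A‖ * u n
                    = ‖PowerSeries.coeff n A‖ * (((n:ℝ)+1)^2 * u n) from by ring, hun1, mul_one]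
            _ ≤ M * cstar * u n := h4
        refine e1.trans ?_
        rw [hεdef, div_mul_eq_mul_div, div_mul_eq_mul_div, le_div_iff₀ (by positivity)]
        calc M * cstar * u n * M ^ v = (cstar * u n) * (M * M ^ v) := by ring
          _ ≤ (cstar * u n) * M ^ n := by
              apply mul_le_mul_of_nonneg_left _ (by positivity)
              rw [← pow_succ']
              exact pow_le_pow_right₀ hM1 (by omega)
          _ = cstar * u n * M ^ n := by ring
    · -- recurrence case
      have hvn : v < n := by omega
      have hrec := rec_step A P v n hann hGlow hvn
      set T : PowerSeries ℂ := ((PowerSeries.trunc n A : Polynomial ℂ) : PowerSeries ℂ) with hTdef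
      have hTco : ∀ i : ℕ, PowerSeries.coeff i T
          = if i < n then PowerSeries.coeff i A else 0 := by
        intro i; rw [hTdef, Polynomial.coeff_coe, PowerSeries.coeff_trunc]
      have hT : CB M ε T := by
        intro i
        rw [hTco i]
        split
        · exact ih i ‹i < n›
        · rw [norm_zero]; exact hXnn i
      have hQdeg : (P.map rho).natDegree < d + 1 :=
        lt_of_le_of_lt Polynomial.natDegree_map_le (by omega)
      have heval : (P.map rho).eval T = ∑ j ∈ Finset.range (d+1), rho (P.coeff j) * T ^ j := by
        rw [Polynomial.eval_eq_sum_range' hQdeg]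
        exact Finset.sum_congr rfl fun j _ => by rw [Polynomial.coeff_map]
      have hcoe : ∀ (q : Polynomial ℂ) (i : ℕ), PowerSeries.coeff i (rho q) = q.coeff i := by
        intro q i
        rw [Polynomial.coeToPowerSeries.ringHom_apply, Polynomial.coeff_coe]
      have hbound : ∀ j ∈ Finset.range (d+1),
          ‖PowerSeries.coeff (v+n) (rho (P.coeff j) * T ^ j)‖
            ≤ cnorm/((d:ℝ)+1) * (ε * u n * M ^ n) := by
        intro j hj
        rw [Finset.mem_range] at hj
        have htarget0 : (0:ℝ) ≤ cnorm/((d:ℝ)+1) * (ε * u n * M ^ n) :=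
          mul_nonneg (by positivity) (hXnn n)
        match j, hj with
        | 0, _ => {
            rw [pow_zero, mul_one, hcoe,
              Polynomial.coeff_eq_zero_of_natDegree_lt (lt_of_le_of_lt (hDz 0) (by omega)),
              norm_zero]
            exact htarget0 }
        | 1, _ => {
            rw [pow_one, PowerSeries.coeff_mul]
            have hterm : ∀ p ∈ antidiagonal (v+n),
                ‖PowerSeries.coeff p.1 (rho (P.coeff 1)) * PowerSeries.coeff p.2 T‖
                  ≤ if p.1 ≤ Dz then B * (ε * (4 * u n) * M ^ (n-1)) else 0 := by
              rintro ⟨a, b⟩ hp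
              rw [Finset.HasAntidiagonal.mem_antidiagonal] at hp
              simp only
              split
              · rename_i ha
                rcases le_or_gt n b with hb | hb
                · rw [hTco b, if_neg (by omega), mul_zero, norm_zero]
                  have := u_pos n
                  positivity
                · rw [norm_mul, hcoe]
                  have h1 : ‖(P.coeff 1).coeff a‖ ≤ B := hB 1 a
                  have h2 := hT b
                  have h3 : u b ≤ 4 * u n := u_four (by omega)
                  have h4 : M ^ b ≤ M ^ (n-1) := pow_le_pow_right₀ hM1 (by omega)
                  have h5 : ‖PowerSeries.coeff b T‖ ≤ ε * (4 * u n) * M ^ (n-1) := by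
                    refine h2.trans ?_
                    have hub := u_pos b
                    have hupn := u_pos n
                    have h6 : ε * u b ≤ ε * (4 * u n) := mul_le_mul_of_nonneg_left h3 hε0.le
                    exact mul_le_mul h6 h4 (pow_nonneg hMpos.le b) (by positivity)
                  exact mul_le_mul h1 h5 (norm_nonneg _) hB0.le
              · rename_i ha
                rw [hcoe,
                  Polynomial.coeff_eq_zero_of_natDegree_lt (lt_of_le_of_lt (hDz 1) (by omega)),
                  zero_mul, norm_zero]
            calc ‖∑ p ∈ antidiagonal (v+n),
                  PowerSeries.coeff p.1 (rho (P.coeff 1)) * PowerSeries.coeff p.2 T‖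
                ≤ ∑ p ∈ antidiagonal (v+n),
                  ‖PowerSeries.coeff p.1 (rho (P.coeff 1)) * PowerSeries.coeff p.2 T‖ :=
                  norm_sum_le _ _
              _ ≤ ∑ p ∈ antidiagonal (v+n),
                  (if p.1 ≤ Dz then B * (ε * (4 * u n) * M ^ (n-1)) else 0) :=
                  Finset.sum_le_sum hterm
              _ = ∑ k ∈ Finset.range (v+n+1),
                  (if k ≤ Dz then B * (ε * (4 * u n) * M ^ (n-1)) else 0) := by
                  rw [Finset.Nat.sum_antidiagonal_eq_sum_range_succ_mk]
              _ ≤ ((Dz:ℝ)+1) * (B * (ε * (4 * u n) * M ^ (n-1))) := by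
                  rw [← Finset.sum_filter, Finset.sum_const, nsmul_eq_mul]
                  have hsub : ((Finset.range (v+n+1)).filter (fun k => k ≤ Dz))
                      ⊆ Finset.range (Dz+1) := by
                    intro x hx
                    rw [Finset.mem_filter] at hx
                    exact Finset.mem_range.mpr (by omega)
                  have hcard : (((Finset.range (v+n+1)).filter (fun k => k ≤ Dz)).card : ℝ)
                      ≤ (Dz:ℝ)+1 := by
                    have := (Finset.card_le_card hsub).trans_eq (Finset.card_range _)
                    exact_mod_cast this
                  have hpos : (0:ℝ) ≤ B * (ε * (4 * u n) * M ^ (n-1)) := by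
                    have := u_pos n; positivity
                  nlinarith
              _ ≤ cnorm/((d:ℝ)+1) * (ε * u n * M ^ n) := by
                  rw [div_mul_eq_mul_div, le_div_iff₀ (by positivity)]
                  have hMn : M ^ n = M ^ (n-1) * M := by
                    rw [← pow_succ, Nat.sub_add_cancel (by omega)]
                  rw [hMn]
                  have ht : (0:ℝ) ≤ ε * u n * M ^ (n-1) := by
                    have := u_pos n; positivity
                  nlinarith [mul_le_mul_of_nonneg_right hM2 ht,
                    mul_nonneg (mul_nonneg (mul_nonneg hB0.le
                      (by positivity : (0:ℝ) ≤ (Dz:ℝ)+1)) (by positivity : (0:ℝ) ≤ (d:ℝ)+1)) ht] }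
        | (jj+2), hjlt => {
            have hj2 : jj + 2 ≤ d := by omega
            have hpj : CB M B' (rho (P.coeff (jj+2))) := by
              intro i
              rw [hcoe]
              rcases le_or_gt i Dz with h | h
              · have h1 := hB (jj+2) i
                have h2 := hB'B i h
                have h3 : B' * u i ≤ B' * u i * M ^ i := by
                  nlinarith [one_le_pow₀ (n := i) hM1, mul_pos hB'0 (u_pos i)]
                linarith
              · rw [Polynomial.coeff_eq_zero_of_natDegree_lt (lt_of_le_of_lt (hDz _) h), norm_zero]
                have := u_pos i
                positivity
            have hTj := CB.pow hM1 hε0.le hT (jj+2)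
            have hprod := CB.mul hM1 hB'0.le (by positivity) hpj hTj
            refine (hprod (v+n)).trans ?_
            have hun := (u_pos n).le
            have huvn := (u_pos (v+n)).le
            calc 16 * B' * (16 ^ (jj+2) * ε ^ (jj+2)) * u (v + n) * M ^ (v + n)
                ≤ 16 * B' * (16 ^ d * ε ^ 2) * u n * M ^ (v + n) := by
                  have e1 : ε ^ (jj+2) ≤ ε ^ 2 := pow_le_pow_of_le_one hε0.le hε1 (by omega)
                  have e2 : (16:ℝ) ^ (jj+2) ≤ 16 ^ d := pow_le_pow_right₀ (by norm_num) hj2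
                  have e3 : u (v+n) ≤ u n := u_anti (by omega)
                  gcongr
              _ = (16 ^ (d+1) * B' * cstar) * (ε * u n * M ^ n) := by
                  rw [pow_add M, ← hεM]; ring
              _ ≤ (cnorm/((d:ℝ)+1)) * (ε * u n * M ^ n) := by
                  apply mul_le_mul_of_nonneg_right _ (hXnn n)
                  rw [le_div_iff₀ (by positivity)]
                  nlinarith }
      have hsum : ‖PowerSeries.coeff (v+n) ((P.map rho).eval T)‖
          ≤ cnorm * (ε * u n * M ^ n) := by
        rw [heval, map_sum]
        refine (norm_sum_le _ _).trans ?_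
        refine (Finset.sum_le_sum hbound).trans ?_
        rw [Finset.sum_const, Finset.card_range, nsmul_eq_mul]
        have hd0 : ((d:ℝ)+1) ≠ 0 := by positivity
        have heq : (((d+1 : ℕ)):ℝ) * (cnorm/((d:ℝ)+1) * (ε * u n * M ^ n))
            = cnorm * (ε * u n * M ^ n) := by
          push_cast
          field_simp
        rw [heq]
      have hfin : cnorm * ‖PowerSeries.coeff n A‖ ≤ cnorm * (ε * u n * M ^ n) := by
        rw [hcdef, ← norm_mul, hrec, norm_neg]
        exact hsum
      exact le_of_mul_le_mul_left hfin hcn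
  refine ⟨M, hM1, fun n => (key n).trans ?_⟩
  have h1 := u_le_one n
  have h2 : (0:ℝ) ≤ M ^ n := by positivity
  have h3 : ε * u n ≤ 1 := mul_le_one₀ hε1 (u_pos n).le h1
  calc ε * u n * M ^ n ≤ 1 * M ^ n := mul_le_mul_of_nonneg_right h3 h2
    _ = M ^ n := one_mul _

lemma alg_geom (A : PowerSeries ℂ)
    (hA : ∃ P : Polynomial (Polynomial ℂ), P ≠ 0 ∧ Polynomial.eval₂ rho A P = 0) :
    ∃ C : ℝ, 1 ≤ C ∧ ∀ n : ℕ, ‖PowerSeries.coeff n A‖ ≤ C ^ (n+1) := by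
  classical
  obtain ⟨P₀, hP₀, hP₀A⟩ := hA
  have hex : ∃ m : ℕ, ∃ P : Polynomial (Polynomial ℂ),
      P ≠ 0 ∧ Polynomial.eval₂ rho A P = 0 ∧ P.natDegree = m :=
    ⟨P₀.natDegree, P₀, hP₀, hP₀A, rfl⟩
  obtain ⟨P, hP, hPA, hPdeg⟩ := Nat.find_spec hex
  have hmin : ∀ Q : Polynomial (Polynomial ℂ), Q ≠ 0 → Polynomial.eval₂ rho A Q = 0 →
      Nat.find hex ≤ Q.natDegree :=
    fun Q h1 h2 => Nat.find_min' hex ⟨Q, h1, h2, rfl⟩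
  have hm0 : P.natDegree ≠ 0 := by
    intro h0
    obtain ⟨a, ha⟩ := Polynomial.natDegree_eq_zero.mp h0
    rw [← ha, Polynomial.eval₂_C] at hPA
    have ha0 : a = 0 := by
      rwa [Polynomial.coeToPowerSeries.ringHom_apply, Polynomial.coe_eq_zero_iff] at hPA
    rw [ha0, map_zero] at ha
    exact hP ha.symm
  have hder : P.derivative ≠ 0 := by
    intro h0
    have hco := Polynomial.coeff_derivative P (P.natDegree - 1)
    rw [h0] at hco
    simp only [Polynomial.coeff_zero] at hco
    have h1 : P.coeff (P.natDegree - 1 + 1) = P.leadingCoeff := by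
      rw [Nat.sub_add_cancel (by omega)]; rfl
    rw [h1] at hco
    have h2 : P.leadingCoeff ≠ 0 := Polynomial.leadingCoeff_ne_zero.mpr hP
    have h3 : ((P.natDegree - 1 : ℕ) : Polynomial ℂ) + 1 ≠ 0 := by
      have := Nat.cast_add_one_ne_zero (R := Polynomial ℂ) (P.natDegree - 1)
      exact_mod_cast this
    exact (mul_ne_zero h2 h3) hco.symm
  have hG : Polynomial.eval₂ rho A P.derivative ≠ 0 := by
    intro h0
    have e1 := hmin P.derivative hder h0
    have e2 := Polynomial.natDegree_derivative_lt hm0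
    omega
  have hex2 : ∃ w : ℕ, PowerSeries.coeff w (Polynomial.eval₂ rho A P.derivative) ≠ 0 := by
    by_contra hcon
    push_neg at hcon
    exact hG (PowerSeries.ext fun w => by rw [hcon w, map_zero])
  set v := Nat.find hex2 with hvdef
  have hcv := Nat.find_spec hex2
  have hGlow : ∀ j < v, PowerSeries.coeff j (Polynomial.eval₂ rho A P.derivative) = 0 :=
    fun j hj => not_not.mp (Nat.find_min hex2 hj)
  set S : Polynomial ℂ := PowerSeries.trunc (v+1) A with hSdef
  set R : PowerSeries ℂ := A - rho S with hRdef
  set q : Polynomial (Polynomial ℂ) := Polynomial.X + Polynomial.C S with hqdef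
  have hcoe : ∀ (p : Polynomial ℂ) (i : ℕ), PowerSeries.coeff i (rho p) = p.coeff i := by
    intro p i
    rw [Polynomial.coeToPowerSeries.ringHom_apply, Polynomial.coeff_coe]
  have hq : Polynomial.eval₂ rho R q = A := by
    rw [hqdef, Polynomial.eval₂_add, Polynomial.eval₂_X, Polynomial.eval₂_C, hRdef]
    ring
  have hRann : Polynomial.eval₂ rho R (P.comp q) = 0 := by
    rw [Polynomial.eval₂_comp, hq, hPA]
  have hqder : (P.comp q).derivative = P.derivative.comp q := by
    rw [Polynomial.derivative_comp, hqdef]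
    simp
  have hRder : Polynomial.eval₂ rho R (P.comp q).derivative
      = Polynomial.eval₂ rho A P.derivative := by
    rw [hqder, Polynomial.eval₂_comp, hq]
  have hR0 : ∀ i ≤ v, PowerSeries.coeff i R = 0 := by
    intro i hi
    rw [hRdef, map_sub, hcoe, hSdef, PowerSeries.coeff_trunc, if_pos (by omega), sub_self]
  obtain ⟨M, hM1, hM⟩ := core R (P.comp q) v hRann
    (by rw [hRder]; exact hGlow) (by rw [hRder]; exact hcv) hR0
  set C : ℝ := M + (1 + ∑ i ∈ Finset.range (v+1), ‖PowerSeries.coeff i A‖) with hCdef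
  have hsum0 : 0 ≤ ∑ i ∈ Finset.range (v+1), ‖PowerSeries.coeff i A‖ :=
    Finset.sum_nonneg fun _ _ => norm_nonneg _
  have hC1 : 1 ≤ C := by rw [hCdef]; linarith
  have hCM : M ≤ C := by rw [hCdef]; linarith
  refine ⟨C, hC1, fun n => ?_⟩
  rcases le_or_gt n v with hn | hn
  · have h1 : ‖PowerSeries.coeff n A‖ ≤ ∑ i ∈ Finset.range (v+1), ‖PowerSeries.coeff i A‖ :=
      Finset.single_le_sum (f := fun i : ℕ => ‖PowerSeries.coeff i A‖)
        (fun _ _ => norm_nonneg _) (Finset.mem_range.mpr (by omega))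
    have h2 : ‖PowerSeries.coeff n A‖ ≤ C := by rw [hCdef]; linarith
    calc ‖PowerSeries.coeff n A‖ ≤ C := h2
      _ ≤ C ^ (n+1) := le_self_pow₀ (by linarith) (by omega)
  · have h3 : PowerSeries.coeff n A = PowerSeries.coeff n R := by
      rw [hRdef, map_sub, hcoe, hSdef, PowerSeries.coeff_trunc, if_neg (by omega), sub_zero]
    rw [h3]
    calc ‖PowerSeries.coeff n R‖ ≤ M ^ n := hM n
      _ ≤ C ^ n := pow_le_pow_left₀ (by linarith) hCM n
      _ ≤ C ^ (n+1) := pow_le_pow_right₀ hC1 (by omega)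


end HadAux

/-- A power series over `ℂ` of finite Hadamard grade has positive radius of
convergence: its coefficients are bounded by `C^(n+1)` for some `C > 0`. -/


theorem coeff_bound_of_finite_hadamardGrade (A : PowerSeries ℂ)
    (h : ∃ d : ℕ, HadamardGradeLe A d) :
    ∃ C : ℝ, 0 < C ∧ ∀ n : ℕ, ‖PowerSeries.coeff n A‖ ≤ C ^ (n + 1) := by
  obtain ⟨d, B, halg, hcoeff⟩ := h
  choose C hC1 hC using fun i => HadAux.alg_geom (B i) (halg i)
  refine ⟨∏ i, C i, Finset.prod_pos (fun i _ => lt_of_lt_of_le one_pos (hC1 i)), fun n => ?_⟩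
  rw [hcoeff n]
  calc ‖∏ i, PowerSeries.coeff n (B i)‖ = ∏ i, ‖PowerSeries.coeff n (B i)‖ :=
        norm_prod _ _
    _ ≤ ∏ i, (C i) ^ (n+1) :=
        Finset.prod_le_prod (fun i _ => norm_nonneg _) (fun i _ => hC i n)
    _ = (∏ i, C i) ^ (n+1) := by rw [Finset.prod_pow]
end

section
/- (Furstenberg) Let A = Σ aₙ zⁿ ∈ ℂ⟦z⟧ be a formal power series algebraic over ℂ(z). Then A is the complete diagonal of a rational power series in two variables: there exist polynomials P, Q ∈ ℂ[X, Y] with Q(0,0) ≠ 0 and a formal power series F ∈ ℂ⟦X, Y⟧ with Q · F = P, such that for every n ≥ 0 the coefficient of Xⁿ Yⁿ in F equals aₙ. -/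
open PowerSeries

noncomputable section
namespace Fur
open MvPowerSeries
abbrev PS := PowerSeries ℂ
abbrev PS2 := MvPowerSeries (Fin 2) ℂ
def ee (a b : ℕ) : Fin 2 →₀ ℕ := Finsupp.single 0 a + Finsupp.single 1 b
@[simp] lemma ee_apply0 (a b : ℕ) : ee a b 0 = a := by simp [ee, Finsupp.single_apply]
@[simp] lemma ee_apply1 (a b : ℕ) : ee a b 1 = b := by simp [ee, Finsupp.single_apply]
lemma ee_eta (d : Fin 2 →₀ ℕ) : ee (d 0) (d 1) = d := by ext i; fin_cases i <;> simp
lemma ee_add (a b c d : ℕ) : ee a b + ee c d = ee (a + c) (b + d) := by ext i; fin_cases i <;> simp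
lemma ee_zero : ee 0 0 = 0 := by ext i; fin_cases i <;> simp
lemma ee_inj {a b c d : ℕ} (h : ee a b = ee c d) : a = c ∧ b = d := by
  constructor
  · have := congrArg (fun f => (f : Fin 2 →₀ ℕ) 0) h; simpa using this
  · have := congrArg (fun f => (f : Fin 2 →₀ ℕ) 1) h; simpa using this
lemma eq_zero_iff (d : Fin 2 →₀ ℕ) : d = 0 ↔ d 0 = 0 ∧ d 1 = 0 := by
  constructor
  · rintro rfl; simp
  · rintro ⟨h0, h1⟩
    rw [← ee_eta d, h0, h1, ee_zero]

def dg (f : PS) : PS2 := fun d => if d 0 = d 1 then PowerSeries.coeff (d 0) f else 0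
lemma coeff_dg (f : PS) (d : Fin 2 →₀ ℕ) :
    MvPowerSeries.coeff d (dg f) = if d 0 = d 1 then PowerSeries.coeff (d 0) f else 0 := rfl

lemma coeff_dg_mul (f : PS) (F : PS2) (d : Fin 2 →₀ ℕ) :
    MvPowerSeries.coeff d (dg f * F) = ∑ m ∈ Finset.range (min (d 0) (d 1) + 1),
      PowerSeries.coeff m f * MvPowerSeries.coeff (ee (d 0 - m) (d 1 - m)) F := by
  rw [MvPowerSeries.coeff_mul]
  set ι : ℕ → (Fin 2 →₀ ℕ) × (Fin 2 →₀ ℕ) := fun m => (ee m m, ee (d 0 - m) (d 1 - m)) with hι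
  have hinj : Set.InjOn ι (Finset.range (min (d 0) (d 1) + 1)) := by
    intro a _ b _ hab
    exact (ee_inj (congrArg Prod.fst hab)).1
  have hsub : (Finset.range (min (d 0) (d 1) + 1)).image ι ⊆ Finset.HasAntidiagonal.antidiagonal d := by
    intro p hp
    obtain ⟨m, hm, rfl⟩ := Finset.mem_image.mp hp
    rw [Finset.mem_range, Nat.lt_succ_iff, le_min_iff] at hm
    rw [Finset.HasAntidiagonal.mem_antidiagonal]
    show ee m m + ee (d 0 - m) (d 1 - m) = d
    rw [ee_add, Nat.add_sub_cancel' hm.1, Nat.add_sub_cancel' hm.2, ee_eta]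
  rw [← Finset.sum_subset hsub ?van, Finset.sum_image hinj]
  · apply Finset.sum_congr rfl
    intro m _
    simp [coeff_dg, hι]
  case van =>
    intro p hp hnp
    rw [Finset.HasAntidiagonal.mem_antidiagonal] at hp
    rw [coeff_dg]
    by_cases hd : p.1 0 = p.1 1
    · exfalso
      apply hnp
      have h0 : p.1 0 + p.2 0 = d 0 := by rw [← hp]; simp
      have h1 : p.1 1 + p.2 1 = d 1 := by rw [← hp]; simp
      apply Finset.mem_image.mpr
      refine ⟨p.1 0, ?_, ?_⟩
      · rw [Finset.mem_range, Nat.lt_succ_iff, le_min_iff]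
        omega
      · have e1 : ee (p.1 0) (p.1 0) = p.1 := by rw (occs := .pos [2]) [hd]; exact ee_eta p.1
        have e2 : ee (d 0 - p.1 0) (d 1 - p.1 0) = p.2 := by
          have : d 0 - p.1 0 = p.2 0 := by omega
          have h2 : d 1 - p.1 0 = p.2 1 := by omega
          rw [this, h2, ee_eta]
        rw [hι]; dsimp only; rw [e1, e2]
    · rw [if_neg hd, zero_mul]

lemma dg_add (f g : PS) : dg (f + g) = dg f + dg g := by
  ext d
  simp only [coeff_dg, map_add, MvPowerSeries.coeff_apply, Pi.add_apply]
  show _ = dg f d + dg g d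
  simp only [dg]
  split <;> simp

lemma dg_one : dg 1 = 1 := by
  ext d
  rw [coeff_dg, MvPowerSeries.coeff_one]
  by_cases h : d 0 = d 1
  · rw [if_pos h, PowerSeries.coeff_one]
    by_cases h0 : d 0 = 0
    · rw [if_pos h0, if_pos]; ext i; fin_cases i <;> simp [h0, ← h]
    · rw [if_neg h0, if_neg]; intro hd; apply h0; rw [hd]; simp
  · rw [if_neg h, if_neg]; intro hd; apply h; rw [hd]; simp

lemma dg_mul (f g : PS) : dg (f * g) = dg f * dg g := by
  ext d
  rw [show MvPowerSeries.coeff d (dg f * dg g) = MvPowerSeries.coeff d (dg f * (dg g : PS2)) from rfl,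
    coeff_dg_mul, coeff_dg]
  by_cases h : d 0 = d 1
  · rw [if_pos h]
    rw [PowerSeries.coeff_mul, Finset.Nat.sum_antidiagonal_eq_sum_range_succ_mk]
    rw [← h, min_self]
    apply Finset.sum_congr rfl
    intro m hm
    rw [coeff_dg]
    simp [← h]
  · rw [if_neg h]
    symm
    apply Finset.sum_eq_zero
    intro m hm
    rw [Finset.mem_range, Nat.lt_succ_iff, le_min_iff] at hm
    rw [coeff_dg]
    simp only [ee_apply0, ee_apply1]
    rw [if_neg (by omega), mul_zero]

/-- the diagonal embedding as a ring hom -/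
def dgHom : PowerSeries ℂ →+* PS2 where
  toFun := dg
  map_one' := dg_one
  map_mul' := dg_mul
  map_zero' := by ext d; simp [coeff_dg, MvPowerSeries.coeff_apply]; show dg 0 d = 0; simp [dg]
  map_add' := dg_add

lemma coeff_dgHom (f : PS) (d : Fin 2 →₀ ℕ) :
    MvPowerSeries.coeff d (dgHom f) = if d 0 = d 1 then PowerSeries.coeff (d 0) f else 0 := rfl

lemma dg_X : dgHom PowerSeries.X = MvPowerSeries.X 0 * MvPowerSeries.X 1 := by
  ext d
  rw [coeff_dgHom]
  have : (MvPowerSeries.X 0 * MvPowerSeries.X 1 : PS2) = MvPowerSeries.monomial (ee 1 1) 1 := by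
    rw [MvPowerSeries.X, MvPowerSeries.X, MvPowerSeries.monomial_mul_monomial, one_mul, ee]
  rw [this, MvPowerSeries.coeff_monomial]
  by_cases h : d 0 = d 1
  · rw [if_pos h, PowerSeries.coeff_X]
    by_cases h1 : d 0 = 1
    · rw [if_pos h1, if_pos]; rw [← ee_eta d, h1, ← h, h1]
    · rw [if_neg h1, if_neg]; intro hd; apply h1; rw [hd]; simp
  · rw [if_neg h, if_neg]; intro hd; apply h; rw [hd]; simp

lemma dg_C (a : ℂ) : dgHom (PowerSeries.C a) = MvPowerSeries.C a := by
  ext d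
  rw [coeff_dgHom, MvPowerSeries.coeff_C]
  by_cases h : d 0 = d 1
  · rw [if_pos h, PowerSeries.coeff_C]
    by_cases h0 : d 0 = 0
    · rw [if_pos h0, if_pos]; ext i; fin_cases i <;> simp [h0, ← h]
    · rw [if_neg h0, if_neg]; intro hd; apply h0; rw [hd]; simp
  · rw [if_neg h, if_neg]; intro hd; apply h; rw [hd]; simp


lemma X1_pow_eq (j : ℕ) : (MvPowerSeries.X 1 : PS2) ^ j = MvPowerSeries.monomial (ee 0 j) 1 := by
  rw [MvPowerSeries.X_pow_eq]
  have h : Finsupp.single (1 : Fin 2) j = ee 0 j := by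
    ext i; fin_cases i <;> simp [Finsupp.single_apply]
  rw [h]

lemma X0_pow_eq (j : ℕ) : (MvPowerSeries.X 0 : PS2) ^ j = MvPowerSeries.monomial (ee j 0) 1 := by
  rw [MvPowerSeries.X_pow_eq]
  have h : Finsupp.single (0 : Fin 2) j = ee j 0 := by
    ext i; fin_cases i <;> simp [Finsupp.single_apply]
  rw [h]

lemma XX_pow_eq (s : ℕ) :
    ((MvPowerSeries.X 0 * MvPowerSeries.X 1 : PS2)) ^ s = MvPowerSeries.monomial (ee s s) 1 := by
  rw [mul_pow, X0_pow_eq, X1_pow_eq, MvPowerSeries.monomial_mul_monomial, one_mul, ee_add,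
    Nat.add_zero, Nat.zero_add]

lemma sub_ee1 (d : Fin 2 →₀ ℕ) (j : ℕ) : d - ee 0 j = ee (d 0) (d 1 - j) := by
  ext i; fin_cases i <;> simp [Finsupp.tsub_apply]

lemma sub_ee0 (d : Fin 2 →₀ ℕ) (j : ℕ) : d - ee j 0 = ee (d 0 - j) (d 1) := by
  ext i; fin_cases i <;> simp [Finsupp.tsub_apply]

lemma sub_eeb (d : Fin 2 →₀ ℕ) (s : ℕ) : d - ee s s = ee (d 0 - s) (d 1 - s) := by
  ext i; fin_cases i <;> simp [Finsupp.tsub_apply]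

lemma ee1_le_iff (d : Fin 2 →₀ ℕ) (j : ℕ) : ee 0 j ≤ d ↔ j ≤ d 1 := by
  constructor
  · intro h; have := h 1; simpa using this
  · intro h i; fin_cases i <;> simpa
lemma ee0_le_iff (d : Fin 2 →₀ ℕ) (j : ℕ) : ee j 0 ≤ d ↔ j ≤ d 0 := by
  constructor
  · intro h; have := h 0; simpa using this
  · intro h i; fin_cases i <;> simpa
lemma eeb_le_iff (d : Fin 2 →₀ ℕ) (s : ℕ) : ee s s ≤ d ↔ s ≤ d 0 ∧ s ≤ d 1 := by
  constructor
  · intro h; exact ⟨by simpa using h 0, by simpa using h 1⟩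
  · intro h i; fin_cases i
    · simpa using h.1
    · simpa using h.2

lemma coeff_mul_X1pow (F : PS2) (j : ℕ) (d : Fin 2 →₀ ℕ) :
    MvPowerSeries.coeff d (F * MvPowerSeries.X 1 ^ j) =
      if j ≤ d 1 then MvPowerSeries.coeff (ee (d 0) (d 1 - j)) F else 0 := by
  rw [X1_pow_eq, MvPowerSeries.coeff_mul_monomial]
  by_cases h : ee 0 j ≤ d
  · rw [if_pos h, if_pos ((ee1_le_iff d j).mp h), sub_ee1, mul_one]
  · rw [if_neg h, if_neg (fun hc => h ((ee1_le_iff d j).mpr hc))]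

lemma coeff_mul_X0pow (F : PS2) (j : ℕ) (d : Fin 2 →₀ ℕ) :
    MvPowerSeries.coeff d (F * MvPowerSeries.X 0 ^ j) =
      if j ≤ d 0 then MvPowerSeries.coeff (ee (d 0 - j) (d 1)) F else 0 := by
  rw [X0_pow_eq, MvPowerSeries.coeff_mul_monomial]
  by_cases h : ee j 0 ≤ d
  · rw [if_pos h, if_pos ((ee0_le_iff d j).mp h), sub_ee0, mul_one]
  · rw [if_neg h, if_neg (fun hc => h ((ee0_le_iff d j).mpr hc))]

lemma coeff_mul_XXpow (F : PS2) (s : ℕ) (d : Fin 2 →₀ ℕ) :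
    MvPowerSeries.coeff d (F * (MvPowerSeries.X 0 * MvPowerSeries.X 1) ^ s) =
      if s ≤ d 0 ∧ s ≤ d 1 then MvPowerSeries.coeff (ee (d 0 - s) (d 1 - s)) F else 0 := by
  rw [XX_pow_eq, MvPowerSeries.coeff_mul_monomial]
  by_cases h : ee s s ≤ d
  · rw [if_pos h, if_pos ((eeb_le_iff d s).mp h), sub_eeb, mul_one]
  · rw [if_neg h, if_neg (fun hc => h ((eeb_le_iff d s).mpr hc))]


/-- evaluation of a polynomial over ℂ⟦z⟧ at y, z ↦ xy, y ↦ y -/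
def ev2 (p : Polynomial PS) : PS2 := Polynomial.eval₂ dgHom (MvPowerSeries.X 1) p

lemma coeff_ev2 (p : Polynomial PS) (d : Fin 2 →₀ ℕ) :
    MvPowerSeries.coeff d (ev2 p) =
      if d 0 ≤ d 1 then PowerSeries.coeff (d 0) (p.coeff (d 1 - d 0)) else 0 := by
  rw [ev2, Polynomial.eval₂_eq_sum, Polynomial.sum_def, map_sum]
  have hterm : ∀ j, MvPowerSeries.coeff d (dgHom (p.coeff j) * MvPowerSeries.X 1 ^ j) =
      if j ≤ d 1 ∧ d 0 = d 1 - j then PowerSeries.coeff (d 0) (p.coeff j) else 0 := by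
    intro j
    rw [coeff_mul_X1pow, coeff_dgHom]
    simp only [ee_apply0, ee_apply1]
    by_cases h1 : j ≤ d 1
    · by_cases h2 : d 0 = d 1 - j
      · rw [if_pos h1, if_pos h2, if_pos ⟨h1, h2⟩]
      · rw [if_pos h1, if_neg h2, if_neg (fun hc => h2 hc.2)]
    · rw [if_neg h1, if_neg (fun hc => h1 hc.1)]
  calc (∑ j ∈ p.support, MvPowerSeries.coeff d (dgHom (p.coeff j) * MvPowerSeries.X 1 ^ j))
      = ∑ j ∈ p.support, if j ≤ d 1 ∧ d 0 = d 1 - j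
          then PowerSeries.coeff (d 0) (p.coeff j) else 0 :=
        Finset.sum_congr rfl fun j _ => hterm j
    _ = if d 0 ≤ d 1 then PowerSeries.coeff (d 0) (p.coeff (d 1 - d 0)) else 0 := by
        rw [Finset.sum_eq_single (d 1 - d 0)]
        · by_cases h : d 0 ≤ d 1
          · rw [if_pos h, if_pos ⟨Nat.sub_le _ _, by omega⟩]
          · rw [if_neg h, if_neg (by omega)]
        · intro j _ hj
          rw [if_neg (by omega)]
        · intro hns
          rw [Polynomial.notMem_support_iff.mp hns]
          simp

lemma dgHom_apply (f : PS) : dgHom f = dg f := rfl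

/-- the explicit geometric-type series Σ_k x^k (g(xy))^k  -/
def Egeom (g : PS) : PS2 :=
  fun d => if d 1 ≤ d 0 then PowerSeries.coeff (d 1) (g ^ (d 0 - d 1)) else 0

lemma coeff_Egeom (g : PS) (d : Fin 2 →₀ ℕ) :
    MvPowerSeries.coeff d (Egeom g) =
      if d 1 ≤ d 0 then PowerSeries.coeff (d 1) (g ^ (d 0 - d 1)) else 0 := rfl

lemma coeff_dg_mul_Egeom (g : PS) (e : Fin 2 →₀ ℕ) :
    MvPowerSeries.coeff e (dg g * Egeom g) =
      if e 1 ≤ e 0 then PowerSeries.coeff (e 1) (g ^ (e 0 - e 1 + 1)) else 0 := by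
  rw [coeff_dg_mul]
  by_cases h : e 1 ≤ e 0
  · rw [min_eq_right h, if_pos h, pow_succ', PowerSeries.coeff_mul,
      Finset.Nat.sum_antidiagonal_eq_sum_range_succ_mk]
    apply Finset.sum_congr rfl
    intro m hm
    rw [Finset.mem_range, Nat.lt_succ_iff] at hm
    rw [coeff_Egeom]
    simp only [ee_apply0, ee_apply1]
    rw [if_pos (by omega), show e 0 - m - (e 1 - m) = e 0 - e 1 by omega]
  · rw [min_eq_left (le_of_not_ge h), if_neg h]
    apply Finset.sum_eq_zero
    intro m hm
    rw [Finset.mem_range, Nat.lt_succ_iff] at hm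
    rw [coeff_Egeom]
    simp only [ee_apply0, ee_apply1]
    rw [if_neg (by omega), mul_zero]

lemma Egeom_inv (g : PS) :
    (1 - MvPowerSeries.X 0 * dgHom g) * Egeom g = 1 := by
  ext d
  have harr : (1 - MvPowerSeries.X 0 * dgHom g) * Egeom g
      = Egeom g - (dg g * Egeom g) * MvPowerSeries.X 0 ^ 1 := by
    rw [dgHom_apply, pow_one]; ring
  rw [harr, map_sub, coeff_mul_X0pow, MvPowerSeries.coeff_one, coeff_Egeom]
  by_cases h0 : d 0 = 0
  · rw [if_neg (show ¬ (1:ℕ) ≤ d 0 by omega), sub_zero]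
    by_cases h1 : d 1 = 0
    · rw [if_pos (show d 1 ≤ d 0 by omega), if_pos ((eq_zero_iff d).mpr ⟨h0, h1⟩), h0, h1]
      simp
    · rw [if_neg (show ¬ d 1 ≤ d 0 by omega), if_neg (fun hc => h1 (((eq_zero_iff d).mp hc).2))]
  · rw [if_pos (show (1:ℕ) ≤ d 0 by omega), coeff_dg_mul_Egeom,
      if_neg (fun hc => h0 (((eq_zero_iff d).mp hc).1))]
    simp only [ee_apply0, ee_apply1]
    by_cases h1 : d 1 ≤ d 0 - 1
    · rw [if_pos (show d 1 ≤ d 0 by omega), if_pos h1,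
        show d 0 - 1 - d 1 + 1 = d 0 - d 1 by omega, sub_self]
    · by_cases h2 : d 1 ≤ d 0
      · have hd1 : d 1 = d 0 := by omega
        rw [if_pos h2, if_neg h1, show d 0 - d 1 = 0 by omega]
        simp only [pow_zero, hd1, PowerSeries.coeff_one]
        rw [if_neg h0, sub_zero]
      · rw [if_neg h2, if_neg h1, sub_zero]

/-- series supported on (a, b) with a ≤ b -/
def Lower (F : PS2) : Prop := ∀ d : Fin 2 →₀ ℕ, d 1 < d 0 → MvPowerSeries.coeff d F = 0

lemma lower_ev2 (p : Polynomial PS) : Lower (ev2 p) := by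
  intro d hd
  rw [coeff_ev2, if_neg (by omega)]

lemma lower_mul {F G : PS2} (hF : Lower F) (hG : Lower G) : Lower (F * G) := by
  intro d hd
  rw [MvPowerSeries.coeff_mul]
  apply Finset.sum_eq_zero
  intro p hp
  rw [Finset.HasAntidiagonal.mem_antidiagonal] at hp
  have h0 : p.1 0 + p.2 0 = d 0 := by rw [← hp]; simp
  have h1 : p.1 1 + p.2 1 = d 1 := by rw [← hp]; simp
  by_cases hc : p.1 1 < p.1 0
  · rw [hF p.1 hc, zero_mul]
  · rw [hG p.2 (by omega), mul_zero]

lemma lower_invOfUnit (S : PS2) (u : ℂˣ) (hS : Lower S) :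
    Lower (MvPowerSeries.invOfUnit S u) := by
  suffices H : ∀ N : ℕ, ∀ d : Fin 2 →₀ ℕ, d 0 + d 1 = N → d 1 < d 0 →
      MvPowerSeries.coeff d (MvPowerSeries.invOfUnit S u) = 0 by
    intro d hd; exact H (d 0 + d 1) d rfl hd
  intro N
  induction N using Nat.strong_induction_on with
  | _ N ih =>
    intro d hN hlt
    have hd0 : d ≠ 0 := by
      intro h
      rw [h] at hlt; simp at hlt
    rw [MvPowerSeries.coeff_invOfUnit, if_neg hd0]
    rw [Finset.sum_eq_zero, mul_zero]
    intro x hx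
    rw [Finset.HasAntidiagonal.mem_antidiagonal] at hx
    have h0 : x.1 0 + x.2 0 = d 0 := by rw [← hx]; simp
    have h1 : x.1 1 + x.2 1 = d 1 := by rw [← hx]; simp
    split
    case isTrue hx2 =>
      have hne : x.1 ≠ 0 := by
        intro hz
        rw [hz, zero_add] at hx
        exact absurd hx (ne_of_lt hx2)
      have hpos : 1 ≤ x.1 0 + x.1 1 := by
        rcases Nat.eq_zero_or_pos (x.1 0 + x.1 1) with h | h
        · exfalso; apply hne; rw [eq_zero_iff]; omega
        · omega
      by_cases hc : x.2 1 < x.2 0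
      · rw [ih (x.2 0 + x.2 1) (by omega) x.2 rfl hc, mul_zero]
      · rw [hS x.1 (by omega), zero_mul]
    case isFalse => rfl

/-- z ↦ XY, y ↦ Y at the level of polynomials -/
def toXY : Polynomial (Polynomial ℂ) →+* MvPolynomial (Fin 2) ℂ :=
  Polynomial.eval₂RingHom
    (Polynomial.eval₂RingHom MvPolynomial.C (MvPolynomial.X 0 * MvPolynomial.X 1))
    (MvPolynomial.X 1)

lemma hom_eq :
    (MvPolynomial.coeToMvPowerSeries.ringHom : MvPolynomial (Fin 2) ℂ →+* PS2).comp
      (Polynomial.eval₂RingHom MvPolynomial.C (MvPolynomial.X 0 * MvPolynomial.X 1))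
    = dgHom.comp Polynomial.coeToPowerSeries.ringHom := by
  apply Polynomial.ringHom_ext
  · intro a
    simp only [RingHom.comp_apply, Polynomial.coe_eval₂RingHom, Polynomial.eval₂_C,
      MvPolynomial.coeToMvPowerSeries.ringHom_apply, Polynomial.coeToPowerSeries.ringHom_apply,
      MvPolynomial.coe_C, Polynomial.coe_C]
    rw [dg_C]
  · simp only [RingHom.comp_apply, Polynomial.coe_eval₂RingHom, Polynomial.eval₂_X,
      MvPolynomial.coeToMvPowerSeries.ringHom_apply, Polynomial.coeToPowerSeries.ringHom_apply,
      MvPolynomial.coe_mul, MvPolynomial.coe_X, Polynomial.coe_X]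
    rw [dg_X]

lemma coe_toXY (p : Polynomial (Polynomial ℂ)) :
    ((toXY p : MvPolynomial (Fin 2) ℂ) : PS2) = ev2 (p.map Polynomial.coeToPowerSeries.ringHom) := by
  show MvPolynomial.coeToMvPowerSeries.ringHom (toXY p) = _
  rw [toXY]; simp only [Polynomial.coe_eval₂RingHom]; rw [Polynomial.hom_eval₂, hom_eq, ev2,
    Polynomial.eval₂_map, MvPolynomial.coeToMvPowerSeries.ringHom_apply, MvPolynomial.coe_X]

/-- the polynomial Q(XY, Y) / Y -/
def QXY (Q : Polynomial (Polynomial ℂ)) : MvPolynomial (Fin 2) ℂ :=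
  Q.sum fun j qj => qj.sum fun i c =>
    MvPolynomial.C c * MvPolynomial.X 0 ^ i * MvPolynomial.X 1 ^ (i + j - 1)

lemma X1_mul_QXY (Q : Polynomial (Polynomial ℂ)) (h00 : (Q.coeff 0).coeff 0 = 0) :
    MvPolynomial.X 1 * QXY Q = toXY Q := by
  rw [toXY]; simp only [Polynomial.coe_eval₂RingHom]; rw [Polynomial.eval₂_eq_sum, QXY,
    Polynomial.sum_def, Polynomial.sum_def, Finset.mul_sum]
  apply Finset.sum_congr rfl
  intro j hj
  simp only [Polynomial.coe_eval₂RingHom]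
  rw [Polynomial.eval₂_eq_sum,
    Polynomial.sum_def, Polynomial.sum_def, Finset.mul_sum, Finset.sum_mul]
  apply Finset.sum_congr rfl
  intro i hi
  have hne : ¬(i = 0 ∧ j = 0) := by
    rintro ⟨rfl, rfl⟩
    exact (Polynomial.mem_support_iff.mp hi) h00
  have he : i + j - 1 + 1 = i + j := by omega
  have key : (MvPolynomial.X 1 : MvPolynomial (Fin 2) ℂ) ^ i * MvPolynomial.X 1 ^ j
      = MvPolynomial.X 1 * MvPolynomial.X 1 ^ (i + j - 1) := by
    rw [← pow_add, ← pow_succ', he]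
  rw [show (MvPolynomial.X 0 * MvPolynomial.X 1 : MvPolynomial (Fin 2) ℂ) ^ i
      = MvPolynomial.X 0 ^ i * MvPolynomial.X 1 ^ i from mul_pow _ _ _]
  linear_combination (MvPolynomial.C ((Q.coeff j).coeff i) * MvPolynomial.X 0 ^ i) * key.symm

lemma X1_ne_zero : (MvPowerSeries.X 1 : PS2) ≠ 0 := by
  intro h
  have : MvPowerSeries.coeff (ee 0 1) (MvPowerSeries.X 1 : PS2) = 1 := by
    rw [← pow_one (MvPowerSeries.X 1 : PS2), X1_pow_eq, MvPowerSeries.coeff_monomial_same]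
  rw [h] at this
  simp at this

/-- Furstenberg's key lemma: a power series with zero constant term which is a
nondegenerate simple root of a polynomial is the diagonal of a rational function. -/
lemma key (B : PS) (Q : Polynomial (Polynomial ℂ))
    (hB0 : PowerSeries.constantCoeff B = 0)
    (hQ00 : (Q.coeff 0).coeff 0 = 0)
    (hQ10 : (Q.coeff 1).coeff 0 ≠ 0)
    (hroot : Polynomial.eval₂ Polynomial.coeToPowerSeries.ringHom B Q = 0) :
    ∃ (P₂ Q₂ : MvPolynomial (Fin 2) ℂ) (F : PS2),
      MvPolynomial.coeff 0 Q₂ ≠ 0 ∧ (Q₂ : PS2) * F = (P₂ : PS2) ∧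
      ∀ n : ℕ, MvPowerSeries.coeff (ee n n) F = PowerSeries.coeff n B := by
  classical
  -- B = X * g
  set g : PS := PowerSeries.mk fun n => PowerSeries.coeff (n + 1) B with hg
  have hXg : (PowerSeries.X : PS) * g = B := by
    ext n
    cases n with
    | zero =>
        rw [PowerSeries.coeff_zero_eq_constantCoeff, map_mul, PowerSeries.constantCoeff_X,
          zero_mul, hB0]
    | succ m => rw [PowerSeries.coeff_succ_X_mul, hg, PowerSeries.coeff_mk]
  -- factor Q over ℂ⟦z⟧
  set Qm : Polynomial PS := Q.map Polynomial.coeToPowerSeries.ringHom with hQm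
  have hQmroot : Qm.IsRoot B := by
    rw [Polynomial.IsRoot, Polynomial.eval_map]
    exact hroot
  obtain ⟨S, hS⟩ := Polynomial.dvd_iff_isRoot.mpr hQmroot
  set St : PS2 := ev2 S with hSt
  set St1 : PS2 := ev2 (Polynomial.derivative S) with hSt1
  set gt : PS2 := dgHom g with hgt
  -- the constant coefficient of St
  have hS0 : PowerSeries.coeff 0 (S.coeff 0) = (Q.coeff 1).coeff 0 := by
    have h1 : Qm.coeff 1 = S.coeff 0 - B * S.coeff 1 := by
      rw [hS, sub_mul, Polynomial.coeff_sub, Polynomial.coeff_X_mul, Polynomial.coeff_C_mul]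
    have h2 : Qm.coeff 1 = (Q.coeff 1 : PS) := by rw [hQm, Polynomial.coeff_map]; rfl
    have h3 := congrArg (PowerSeries.coeff 0) h1
    rw [h2] at h3
    rw [Polynomial.coeff_coe] at h3
    rw [map_sub, PowerSeries.coeff_zero_eq_constantCoeff, map_mul, hB0, zero_mul, sub_zero]
      at h3
    rw [PowerSeries.coeff_zero_eq_constantCoeff]
    exact h3.symm
  have hcSt : MvPowerSeries.constantCoeff St = (Q.coeff 1).coeff 0 := by
    rw [← MvPowerSeries.coeff_zero_eq_constantCoeff_apply, hSt, coeff_ev2]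
    simp only [Finsupp.coe_zero, Pi.zero_apply, le_refl, if_true, Nat.sub_zero]
    exact hS0
  set u : ℂˣ := Units.mk0 _ hQ10 with hu
  set W : PS2 := MvPowerSeries.invOfUnit St u with hW
  have hSW : St * W = 1 := MvPowerSeries.mul_invOfUnit St u (by rw [hcSt]; rfl)
  have hEg : (1 - MvPowerSeries.X 0 * gt) * Egeom g = 1 := Egeom_inv g
  set F : PS2 := MvPowerSeries.X 1 * Egeom g
      + MvPowerSeries.X 1 ^ 2 * (St1 * W) with hF
  have hdB : dgHom B = MvPowerSeries.X 0 * MvPowerSeries.X 1 * gt := by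
    rw [← hXg, map_mul, dg_X, hgt]
  -- ev2 of Qm
  have hev2Qm : ev2 Qm = (MvPowerSeries.X 1 - dgHom B) * St := by
    rw [hS, ev2, Polynomial.eval₂_mul, Polynomial.eval₂_sub, Polynomial.eval₂_X,
      Polynomial.eval₂_C, hSt, ev2]
  set D : PS2 := (1 - MvPowerSeries.X 0 * gt) * St with hD
  have hDX1 : MvPowerSeries.X 1 * D = ev2 Qm := by
    rw [hev2Qm, hdB, hD]; ring
  -- Q₂
  set Q₂ : MvPolynomial (Fin 2) ℂ := QXY Q with hQ₂
  have hQ₂coe : (Q₂ : PS2) = D := by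
    apply mul_left_cancel₀ X1_ne_zero
    have h1 : ((MvPolynomial.X 1 * Q₂ : MvPolynomial (Fin 2) ℂ) : PS2)
        = (MvPowerSeries.X 1 : PS2) * (Q₂ : PS2) := by
      rw [MvPolynomial.coe_mul, MvPolynomial.coe_X]
    rw [← h1, hQ₂, X1_mul_QXY Q hQ00, coe_toXY, ← hQm, hDX1]
  -- P₂
  set P₂ : MvPolynomial (Fin 2) ℂ := MvPolynomial.X 1 * toXY (Polynomial.derivative Q) with hP₂
  have hP₂coe : (P₂ : PS2) = MvPowerSeries.X 1 * (St + (MvPowerSeries.X 1 - dgHom B) * St1) := by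
    rw [hP₂, MvPolynomial.coe_mul, MvPolynomial.coe_X, coe_toXY, ← Polynomial.derivative_map,
      ← hQm, hS, Polynomial.derivative_mul, Polynomial.derivative_sub, Polynomial.derivative_X,
      Polynomial.derivative_C, sub_zero, one_mul]
    rw [ev2, Polynomial.eval₂_add, Polynomial.eval₂_mul, Polynomial.eval₂_sub,
      Polynomial.eval₂_X, Polynomial.eval₂_C, ← ev2, ← ev2, ← hSt, ← hSt1]
  refine ⟨P₂, Q₂, F, ?_, ?_, ?_⟩
  · rw [← MvPolynomial.coeff_coe, hQ₂coe, MvPowerSeries.coeff_zero_eq_constantCoeff_apply, hD,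
      map_mul, map_sub, map_one, map_mul, MvPowerSeries.constantCoeff_X, zero_mul, sub_zero,
      one_mul, hcSt]
    exact hQ10
  · rw [hQ₂coe, hP₂coe, hdB, hD, hF]
    calc (1 - MvPowerSeries.X 0 * gt) * St
        * (MvPowerSeries.X 1 * Egeom g + MvPowerSeries.X 1 ^ 2 * (St1 * W))
        = St * MvPowerSeries.X 1 * ((1 - MvPowerSeries.X 0 * gt) * Egeom g)
          + MvPowerSeries.X 1 ^ 2 * ((1 - MvPowerSeries.X 0 * gt) * St1) * (St * W) := by ring
      _ = St * MvPowerSeries.X 1 + MvPowerSeries.X 1 ^ 2 * ((1 - MvPowerSeries.X 0 * gt) * St1)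
          := by rw [hEg, hSW, mul_one, mul_one]
      _ = MvPowerSeries.X 1 * (St + (MvPowerSeries.X 1
          - MvPowerSeries.X 0 * MvPowerSeries.X 1 * gt) * St1) := by ring
  · intro n
    have hlow : Lower (St1 * W) :=
      lower_mul (lower_ev2 _) (lower_invOfUnit St u (lower_ev2 S))
    rw [hF, map_add]
    have ht1 : MvPowerSeries.coeff (ee n n) (MvPowerSeries.X 1 * Egeom g)
        = PowerSeries.coeff n B := by
      rw [show (MvPowerSeries.X 1 : PS2) * Egeom g = Egeom g * MvPowerSeries.X 1 ^ 1 by ring,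
        coeff_mul_X1pow]
      simp only [ee_apply0, ee_apply1]
      cases n with
      | zero =>
          rw [if_neg (by omega), ← PowerSeries.coeff_zero_eq_constantCoeff_apply] at *
          rw [hB0]
      | succ m =>
          rw [if_pos (by omega), coeff_Egeom]
          simp only [ee_apply0, ee_apply1]
          rw [if_pos (by omega), show m + 1 - (m + 1 - 1) = 1 by omega, pow_one,
            show m + 1 - 1 = m by omega, hg, PowerSeries.coeff_mk]
    have ht2 : MvPowerSeries.coeff (ee n n) (MvPowerSeries.X 1 ^ 2 * (St1 * W)) = 0 := by
      rw [show (MvPowerSeries.X 1 : PS2) ^ 2 * (St1 * W) = (St1 * W) * MvPowerSeries.X 1 ^ 2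
        by ring, coeff_mul_X1pow]
      simp only [ee_apply0, ee_apply1]
      by_cases h2 : 2 ≤ n
      · rw [if_pos h2]
        exact hlow _ (by simp; omega)
      · rw [if_neg h2]
    rw [ht1, ht2, add_zero]

section Taylor
variable {R : Type*} [CommRing R]

lemma pow2 (a h : R) : ∀ n : ℕ, ∃ c : R, (a + h) ^ n = a ^ n + n * h * a ^ (n - 1) + h ^ 2 * c := by
  intro n
  induction n with
  | zero => exact ⟨0, by simp⟩
  | succ m ih =>
      obtain ⟨c, hc⟩ := ih
      cases m with
      | zero => exact ⟨0, by push_cast; ring_nf⟩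
      | succ k =>
          refine ⟨(k + 1 : ℕ) * a ^ k + (a + h) * c, ?_⟩
          have h1 : (a + h) ^ (k + 1 + 1) = (a + h) ^ (k + 1) * (a + h) := pow_succ _ _
          rw [h1, hc]
          have h2 : (a : R) ^ (k + 1 - 1) = a ^ k := by norm_num
          have h3 : (a : R) ^ (k + 1 + 1 - 1) = a ^ (k + 1) := by norm_num
          rw [h2, h3]
          push_cast
          ring

lemma taylor2 (p : Polynomial R) (a h : R) :
    ∃ c : R, p.eval (a + h)
      = p.eval a + h * (Polynomial.derivative p).eval a + h ^ 2 * c := by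
  induction p using Polynomial.induction_on' with
  | add p q hp hq =>
      obtain ⟨cp, hcp⟩ := hp
      obtain ⟨cq, hcq⟩ := hq
      refine ⟨cp + cq, ?_⟩
      rw [Polynomial.eval_add, hcp, hcq, map_add, Polynomial.eval_add, Polynomial.eval_add]
      ring
  | monomial n b =>
      obtain ⟨c, hc⟩ := pow2 a h n
      refine ⟨b * c, ?_⟩
      rw [Polynomial.eval_monomial, Polynomial.derivative_monomial, Polynomial.eval_monomial,
        Polynomial.eval_monomial, hc]
      ring

lemma comp_CmulX_coeff (q : Polynomial R) (u : R) (j : ℕ) :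
    (q.comp (Polynomial.C u * Polynomial.X)).coeff j = q.coeff j * u ^ j := by
  classical
  rw [Polynomial.comp, Polynomial.eval₂_eq_sum, Polynomial.sum_def]
  rw [Polynomial.finset_sum_coeff]
  have hterm : ∀ e, (Polynomial.C (q.coeff e) * (Polynomial.C u * Polynomial.X) ^ e).coeff j
      = if j = e then q.coeff e * u ^ e else 0 := by
    intro e
    rw [mul_pow, ← Polynomial.C_pow, ← mul_assoc, ← Polynomial.C_mul, Polynomial.coeff_C_mul,
      Polynomial.coeff_X_pow]
    split <;> simp [mul_comm]
  rw [Finset.sum_congr rfl fun e _ => hterm e]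
  rw [Finset.sum_ite_eq q.support j fun e => q.coeff e * u ^ e]
  split
  · rfl
  · next hns => rw [Polynomial.notMem_support_iff.mp hns, zero_mul]

lemma comp_shift_coeff (P : Polynomial (Polynomial R)) (T u : Polynomial R) (j : ℕ) :
    (P.comp (Polynomial.C T + Polynomial.C u * Polynomial.X)).coeff j
      = (Polynomial.hasseDeriv j P).eval T * u ^ j := by
  have h1 : (Polynomial.C T + Polynomial.C u * Polynomial.X : Polynomial (Polynomial R))
      = (Polynomial.X + Polynomial.C T).comp (Polynomial.C u * Polynomial.X) := by
    rw [Polynomial.add_comp, Polynomial.X_comp, Polynomial.C_comp, add_comm]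
  rw [h1, ← Polynomial.comp_assoc, ← Polynomial.taylor_apply, comp_CmulX_coeff,
    Polynomial.taylor_coeff]

end Taylor

lemma coePS_eval (p : Polynomial (Polynomial ℂ)) (T : Polynomial ℂ) :
    ((p.eval T : Polynomial ℂ) : PS)
      = Polynomial.eval₂ Polynomial.coeToPowerSeries.ringHom (T : PS) p := by
  show Polynomial.coeToPowerSeries.ringHom (p.eval T) = _
  rw [Polynomial.eval, Polynomial.hom_eval₂, RingHom.comp_id]; rfl

lemma dvd_poly_of_dvd_ps (q : Polynomial ℂ) (m : ℕ)
    (h : (PowerSeries.X : PS) ^ m ∣ (q : PS)) : Polynomial.X ^ m ∣ q := by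
  rw [Polynomial.X_pow_dvd_iff]
  intro d hd
  have := PowerSeries.X_pow_dvd_iff.mp h d hd
  rwa [Polynomial.coeff_coe] at this

lemma dvd_ps_of_dvd_poly (q : Polynomial ℂ) (m : ℕ)
    (h : Polynomial.X ^ m ∣ q) : (PowerSeries.X : PS) ^ m ∣ (q : PS) := by
  rw [PowerSeries.X_pow_dvd_iff]
  intro d hd
  rw [Polynomial.coeff_coe]
  exact Polynomial.X_pow_dvd_iff.mp h d hd

lemma reduce (A : PS) (P0 : Polynomial (Polynomial ℂ)) (hP0 : P0 ≠ 0)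
    (hP0A : Polynomial.eval₂ Polynomial.coeToPowerSeries.ringHom A P0 = 0) :
    ∃ (s : ℕ) (T : Polynomial ℂ) (B : PS) (Q : Polynomial (Polynomial ℂ)),
      PowerSeries.constantCoeff B = 0 ∧ (Q.coeff 0).coeff 0 = 0 ∧ (Q.coeff 1).coeff 0 ≠ 0 ∧
      Polynomial.eval₂ Polynomial.coeToPowerSeries.ringHom B Q = 0 ∧
      ∀ n, PowerSeries.coeff n A
        = T.coeff n + (if s ≤ n then PowerSeries.coeff (n - s) B else 0) := by
  classical
  -- choose a minimal-degree annihilating polynomial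
  have hex : ∃ n : ℕ, ∃ Pp : Polynomial (Polynomial ℂ), Pp ≠ 0 ∧
      Polynomial.eval₂ Polynomial.coeToPowerSeries.ringHom A Pp = 0 ∧ Pp.natDegree = n :=
    ⟨P0.natDegree, P0, hP0, hP0A, rfl⟩
  obtain ⟨P, hPne, hPA, hPdeg⟩ := Nat.find_spec hex
  -- degree is positive
  have hdegpos : P.natDegree ≠ 0 := by
    intro h0
    have hC : P = Polynomial.C (P.coeff 0) := Polynomial.eq_C_of_natDegree_eq_zero h0
    rw [hC, Polynomial.eval₂_C] at hPA
    have : P.coeff 0 = 0 := by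
      have := hPA
      rwa [Polynomial.coeToPowerSeries.ringHom_apply, Polynomial.coe_eq_zero_iff] at this
    apply hPne
    rw [hC, this, map_zero]
  set P' := Polynomial.derivative P with hP'
  have hP'ne : P' ≠ 0 := by
    intro h
    exact hdegpos (Polynomial.natDegree_eq_zero_of_derivative_eq_zero h)
  have hP'A : Polynomial.eval₂ Polynomial.coeToPowerSeries.ringHom A P' ≠ 0 := by
    intro h
    have hlt : P'.natDegree < Nat.find hex := by
      rw [← hPdeg]
      exact Polynomial.natDegree_derivative_lt hdegpos
    exact Nat.find_min hex hlt ⟨P', hP'ne, h, rfl⟩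
  -- the order r of P'(z, A)
  have hexr : ∃ k, PowerSeries.coeff k
      (Polynomial.eval₂ Polynomial.coeToPowerSeries.ringHom A P') ≠ 0 := by
    by_contra hcon
    push_neg at hcon
    exact hP'A (PowerSeries.ext fun k => by rw [hcon k, map_zero])
  set r := Nat.find hexr with hrdef
  have hr : PowerSeries.coeff r
      (Polynomial.eval₂ Polynomial.coeToPowerSeries.ringHom A P') ≠ 0 := Nat.find_spec hexr
  have hrmin : ∀ k < r, PowerSeries.coeff k
      (Polynomial.eval₂ Polynomial.coeToPowerSeries.ringHom A P') = 0 := by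
    intro k hk
    by_contra hcon
    exact Nat.find_min hexr hk hcon
  set s := r + 1 with hsdef
  set T := PowerSeries.trunc (s + 1) A with hT
  set B := PowerSeries.mk fun n => if n = 0 then 0 else PowerSeries.coeff (n + s) A with hB
  have hB0 : PowerSeries.constantCoeff B = 0 := by
    rw [← PowerSeries.coeff_zero_eq_constantCoeff_apply, hB, PowerSeries.coeff_mk, if_pos rfl]
  have hglue : ∀ n, PowerSeries.coeff n A
      = T.coeff n + (if s ≤ n then PowerSeries.coeff (n - s) B else 0) := by
    intro n
    rw [hT, PowerSeries.coeff_trunc, hB]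
    by_cases h1 : s ≤ n
    · rw [if_pos h1, PowerSeries.coeff_mk]
      by_cases h2 : n = s
      · rw [if_pos (by omega), if_pos (by omega), add_zero]
      · rw [if_neg (by omega), if_neg (by omega), zero_add,
          show n - s + s = n by omega]
    · rw [if_neg h1, if_pos (by omega), add_zero]
  have hTA : ((T : PS) + (PowerSeries.X : PS) ^ s * B) = A := by
    ext n
    rw [map_add, Polynomial.coeff_coe, PowerSeries.coeff_X_pow_mul', hglue n, hT,
      PowerSeries.coeff_trunc]
  -- the composed polynomial
  set Qh := P.comp (Polynomial.C T + Polynomial.C (Polynomial.X ^ s) * Polynomial.X) with hQh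
  have hQhc : ∀ j, Qh.coeff j = (Polynomial.hasseDeriv j P).eval T * (Polynomial.X ^ s) ^ j :=
    fun j => comp_shift_coeff P T (Polynomial.X ^ s) j
  -- order facts
  have hTAdvd : (PowerSeries.X : PS) ^ (s + 1) ∣ ((T : PS) - A) := by
    rw [PowerSeries.X_pow_dvd_iff]
    intro m hm
    rw [map_sub, Polynomial.coeff_coe, hT, PowerSeries.coeff_trunc, if_pos hm, sub_self]
  have hrdvd : (PowerSeries.X : PS) ^ r ∣
      Polynomial.eval₂ Polynomial.coeToPowerSeries.ringHom A P' := by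
    rw [PowerSeries.X_pow_dvd_iff]
    exact hrmin
  -- P'(z, T) : divisible by X^r with nonzero coefficient r
  obtain ⟨c3, hc3⟩ := Polynomial.sub_dvd_eval_sub (T : PS) A
    (P'.map Polynomial.coeToPowerSeries.ringHom)
  have hsub3 : Polynomial.eval₂ Polynomial.coeToPowerSeries.ringHom ((T : Polynomial ℂ) : PS) P'
      = Polynomial.eval₂ Polynomial.coeToPowerSeries.ringHom A P' + ((T : PS) - A) * c3 := by
    rw [← Polynomial.eval_map _ ((T : Polynomial ℂ) : PS), ← Polynomial.eval_map _ A]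
    linear_combination hc3
  have hPT : ∀ k, k ≤ r → PowerSeries.coeff k
        (Polynomial.eval₂ Polynomial.coeToPowerSeries.ringHom ((T : Polynomial ℂ) : PS) P')
      = PowerSeries.coeff k (Polynomial.eval₂ Polynomial.coeToPowerSeries.ringHom A P') := by
    intro k hk
    rw [hsub3, map_add]
    have hz : PowerSeries.coeff k (((T : PS) - A) * c3) = 0 := by
      apply PowerSeries.X_pow_dvd_iff.mp (hTAdvd.mul_right c3) k
      omega
    rw [hz, add_zero]
  have hrT : PowerSeries.coeff r
      (Polynomial.eval₂ Polynomial.coeToPowerSeries.ringHom ((T : Polynomial ℂ) : PS) P') ≠ 0 := by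
    rw [hPT r le_rfl]; exact hr
  have hrTdvd : (PowerSeries.X : PS) ^ r ∣
      Polynomial.eval₂ Polynomial.coeToPowerSeries.ringHom ((T : Polynomial ℂ) : PS) P' := by
    rw [PowerSeries.X_pow_dvd_iff]
    intro k hk
    rw [hPT k (le_of_lt hk)]
    exact hrmin k hk
  -- P(z, T) : divisible by X^(s+r+1)
  obtain ⟨c2, hc2⟩ := taylor2 (P.map Polynomial.coeToPowerSeries.ringHom) A ((T : PS) - A)
  have hordP : (PowerSeries.X : PS) ^ (s + r + 1) ∣
      Polynomial.eval₂ Polynomial.coeToPowerSeries.ringHom ((T : Polynomial ℂ) : PS) P := by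
    have hTeq : A + ((T : PS) - A) = ((T : Polynomial ℂ) : PS) := by ring
    rw [hTeq] at hc2
    rw [Polynomial.derivative_map, Polynomial.eval_map, Polynomial.eval_map,
      Polynomial.eval_map, hPA, zero_add, ← hP'] at hc2
    rw [hc2]
    apply dvd_add
    · have h1 : (PowerSeries.X : PS) ^ (s + 1) * (PowerSeries.X : PS) ^ r ∣
          ((T : PS) - A) * Polynomial.eval₂ Polynomial.coeToPowerSeries.ringHom A P' :=
        mul_dvd_mul hTAdvd hrdvd
      rw [← pow_add] at h1
      rw [show s + r + 1 = s + 1 + r by omega]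
      exact h1
    · have h2 : (PowerSeries.X : PS) ^ (s + r + 1) ∣ ((T : PS) - A) ^ 2 := by
        refine dvd_trans (pow_dvd_pow _ (show s + r + 1 ≤ (s + 1) * 2 by omega)) ?_
        rw [pow_mul]
        exact pow_dvd_pow_of_dvd hTAdvd 2
      exact h2.mul_right c2
  -- all coefficients of Qh divisible by X^(s+r)
  have hXsr : ∀ m : ℕ, (Polynomial.coeToPowerSeries.ringHom (Polynomial.X ^ m) : PS)
      = (PowerSeries.X : PS) ^ m := by
    intro m
    rw [Polynomial.coeToPowerSeries.ringHom_apply, Polynomial.coe_pow, Polynomial.coe_X]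
  have hdvdall : ∀ j, Polynomial.X ^ (s + r) ∣ Qh.coeff j := by
    intro j
    apply dvd_poly_of_dvd_ps _ (s + r)
    rw [hQhc j]
    have hcoe : ((((Polynomial.hasseDeriv j P).eval T * (Polynomial.X ^ s) ^ j) : Polynomial ℂ) : PS)
        = Polynomial.eval₂ Polynomial.coeToPowerSeries.ringHom ((T : Polynomial ℂ) : PS)
            (Polynomial.hasseDeriv j P) * ((PowerSeries.X : PS) ^ s) ^ j := by
      rw [Polynomial.coe_mul, Polynomial.coe_pow, Polynomial.coe_pow, Polynomial.coe_X,
        coePS_eval]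
    rw [hcoe]
    match j with
    | 0 =>
        rw [Polynomial.hasseDeriv_zero']
        simp only [pow_zero, mul_one]
        exact dvd_trans (pow_dvd_pow _ (by omega)) hordP
    | 1 =>
        rw [Polynomial.hasseDeriv_one', ← hP', pow_one, show s + r = r + s by omega, pow_add]
        exact mul_dvd_mul hrTdvd (dvd_refl _)
    | (j + 2) =>
        apply dvd_mul_of_dvd_right
        rw [← pow_mul]
        apply pow_dvd_pow
        have hmul : s * (j + 2) = s * j + s + s := by ring
        omega
  choose cfun hcf using hdvdall
  set Q := ∑ j ∈ Finset.range (Qh.natDegree + 1), Polynomial.C (cfun j) * Polynomial.X ^ j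
    with hQdef
  have hQco : ∀ j, Q.coeff j = if j ≤ Qh.natDegree then cfun j else 0 := by
    intro j
    rw [hQdef, Polynomial.finset_sum_coeff]
    have hterm : ∀ b ∈ Finset.range (Qh.natDegree + 1),
        (Polynomial.C (cfun b) * Polynomial.X ^ b).coeff j = if j = b then cfun b else 0 := by
      intro b _
      rw [Polynomial.coeff_C_mul, Polynomial.coeff_X_pow]
      split <;> simp
    rw [Finset.sum_congr rfl hterm, Finset.sum_ite_eq (Finset.range (Qh.natDegree + 1)) j]
    by_cases hj : j ≤ Qh.natDegree
    · rw [if_pos (Finset.mem_range.mpr (by omega)), if_pos hj]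
    · rw [if_neg (by rw [Finset.mem_range]; omega), if_neg hj]
  have hCQ : Polynomial.C (Polynomial.X ^ (s + r)) * Q = Qh := by
    apply Polynomial.ext
    intro j
    rw [Polynomial.coeff_C_mul, hQco]
    by_cases hj : j ≤ Qh.natDegree
    · rw [if_pos hj]
      exact (hcf j).symm
    · rw [if_neg hj, mul_zero, eq_comm]
      exact Polynomial.coeff_eq_zero_of_natDegree_lt (by omega)
  -- Q annihilates B
  have hQhB : Polynomial.eval₂ Polynomial.coeToPowerSeries.ringHom B Qh = 0 := by
    rw [hQh, Polynomial.eval₂_comp, Polynomial.eval₂_add, Polynomial.eval₂_C,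
      Polynomial.eval₂_mul, Polynomial.eval₂_C, Polynomial.eval₂_X, hXsr s,
      Polynomial.coeToPowerSeries.ringHom_apply, hTA, hPA]
  have hQB : Polynomial.eval₂ Polynomial.coeToPowerSeries.ringHom B Q = 0 := by
    have h0 : Polynomial.eval₂ Polynomial.coeToPowerSeries.ringHom B
        (Polynomial.C (Polynomial.X ^ (s + r)) * Q) = 0 := by
      rw [hCQ]; exact hQhB
    rw [Polynomial.eval₂_mul, Polynomial.eval₂_C, hXsr (s + r)] at h0
    exact (mul_eq_zero.mp h0).resolve_left (pow_ne_zero _ PowerSeries.X_ne_zero)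
  -- constant coefficient of Q
  have hQ0 : (Q.coeff 0).coeff 0 = 0 := by
    obtain ⟨d, hd⟩ : Polynomial.X ^ (s + r + 1) ∣ Qh.coeff 0 := by
      apply dvd_poly_of_dvd_ps _ (s + r + 1)
      rw [hQhc 0]
      simp only [pow_zero, mul_one]
      rw [Polynomial.hasseDeriv_zero', coePS_eval]
      exact hordP
    have h00 : Polynomial.X ^ (s + r) * Q.coeff 0
        = Polynomial.X ^ (s + r) * (Polynomial.X * d) := by
      have hc0 := congrArg (fun p => Polynomial.coeff p 0) hCQ
      simp only [Polynomial.coeff_C_mul] at hc0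
      rw [hc0, hd, pow_succ]
      ring
    have hQc0 := mul_left_cancel₀ (pow_ne_zero (s + r) Polynomial.X_ne_zero) h00
    rw [hQc0, Polynomial.mul_coeff_zero, Polynomial.coeff_X_zero, zero_mul]
  -- coefficient 1 of Q
  have hQ1 : (Q.coeff 1).coeff 0 ≠ 0 := by
    obtain ⟨e, he⟩ : Polynomial.X ^ r ∣ P'.eval T := by
      apply dvd_poly_of_dvd_ps _ r
      rw [coePS_eval]
      exact hrTdvd
    have he0 : e.coeff 0 ≠ 0 := by
      intro h0
      apply hrT
      rw [← coePS_eval, he, Polynomial.coeff_coe]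
      have hxx := Polynomial.coeff_X_pow_mul e r 0
      rw [zero_add] at hxx
      rw [hxx, h0]
    have hQh1 : Qh.coeff 1 = Polynomial.X ^ (s + r) * e := by
      rw [hQhc 1, Polynomial.hasseDeriv_one', ← hP', he, pow_one, pow_add]
      ring
    have hQhne : Qh.coeff 1 ≠ 0 := by
      rw [hQh1]
      apply mul_ne_zero (pow_ne_zero _ Polynomial.X_ne_zero)
      intro h
      apply he0
      rw [h, Polynomial.coeff_zero]
    have hdeg1 : 1 ≤ Qh.natDegree := Polynomial.le_natDegree_of_ne_zero hQhne
    have h11 : Polynomial.X ^ (s + r) * Q.coeff 1 = Polynomial.X ^ (s + r) * e := by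
      have hc1 := congrArg (fun p => Polynomial.coeff p 1) hCQ
      simp only [Polynomial.coeff_C_mul] at hc1
      rw [hc1, hQh1]
    rw [mul_left_cancel₀ (pow_ne_zero (s + r) Polynomial.X_ne_zero) h11]
    exact he0
  exact ⟨s, T, B, Q, hB0, hQ0, hQ1, hQB, hglue⟩
end Fur

open Fur in
/-- (Furstenberg) An algebraic power series over `ℂ` is the complete diagonal of a
rational power series in two variables. -/
theorem isAlgebraicPS_is_diagonal_of_rational (A : PowerSeries ℂ) (h : IsAlgebraicPS A) :
    ∃ (P Q : MvPolynomial (Fin 2) ℂ) (F : MvPowerSeries (Fin 2) ℂ),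
      MvPolynomial.coeff 0 Q ≠ 0 ∧
      (Q : MvPowerSeries (Fin 2) ℂ) * F = (P : MvPowerSeries (Fin 2) ℂ) ∧
      ∀ n : ℕ, MvPowerSeries.coeff (Finsupp.equivFunOnFinite.symm fun _ => n) F =
        PowerSeries.coeff n A := by
  classical
  obtain ⟨P0, hP0, hP0A⟩ := h
  obtain ⟨s, T, B, Q, hB0, hQ00, hQ10, hQB, hglue⟩ := Fur.reduce A P0 hP0 hP0A
  obtain ⟨P₂, Q₂, F, hQ₂0, hQF, hdiag⟩ := Fur.key B Q hB0 hQ00 hQ10 hQB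
  set Txy : MvPolynomial (Fin 2) ℂ :=
    Polynomial.eval₂RingHom MvPolynomial.C (MvPolynomial.X 0 * MvPolynomial.X 1) T with hTxy
  have hTxycoe : ((Txy : MvPolynomial (Fin 2) ℂ) : Fur.PS2) = Fur.dgHom (T : PowerSeries ℂ) := by
    have hh := RingHom.congr_fun Fur.hom_eq T
    rw [RingHom.comp_apply, RingHom.comp_apply,
      MvPolynomial.coeToMvPowerSeries.ringHom_apply,
      Polynomial.coeToPowerSeries.ringHom_apply] at hh
    exact hh
  refine ⟨Txy * Q₂ + (MvPolynomial.X 0 * MvPolynomial.X 1) ^ s * P₂, Q₂,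
    Fur.dgHom (T : PowerSeries ℂ) + (MvPowerSeries.X 0 * MvPowerSeries.X 1) ^ s * F,
    hQ₂0, ?_, ?_⟩
  · have hco : ((Txy * Q₂ + (MvPolynomial.X 0 * MvPolynomial.X 1) ^ s * P₂ :
        MvPolynomial (Fin 2) ℂ) : Fur.PS2)
        = (Txy : Fur.PS2) * (Q₂ : Fur.PS2)
          + (MvPowerSeries.X 0 * MvPowerSeries.X 1) ^ s * (P₂ : Fur.PS2) := by
      rw [MvPolynomial.coe_add, MvPolynomial.coe_mul, MvPolynomial.coe_mul,
        MvPolynomial.coe_pow, MvPolynomial.coe_mul, MvPolynomial.coe_X, MvPolynomial.coe_X]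
    rw [hco, hTxycoe, ← hQF]
    ring
  · intro n
    have hd : (Finsupp.equivFunOnFinite.symm fun _ => n : Fin 2 →₀ ℕ) = Fur.ee n n := by
      ext i; fin_cases i <;> simp
    rw [hd, map_add, Fur.coeff_dgHom]
    rw [show ((MvPowerSeries.X 0 * MvPowerSeries.X 1 : Fur.PS2)) ^ s * F
      = F * (MvPowerSeries.X 0 * MvPowerSeries.X 1) ^ s by ring, Fur.coeff_mul_XXpow]
    simp only [Fur.ee_apply0, Fur.ee_apply1, if_pos rfl]
    rw [Polynomial.coeff_coe, hglue n]
    by_cases hs : s ≤ n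
    · rw [if_pos (show s ≤ n ∧ s ≤ n from ⟨hs, hs⟩), if_pos hs, hdiag (n - s)]
      simp
    · rw [if_neg (show ¬(s ≤ n ∧ s ≤ n) from fun hc => hs hc.1), if_neg hs]
      simp
end
end

section
/- (Eisenstein–Heine) Let Σ aₙ zⁿ ∈ ℚ⟦z⟧ be a formal power series with rational coefficients that is algebraic over ℚ(z). Then there exist positive integers A and C such that for every n ≥ 0 the rational number C · Aⁿ · aₙ is an integer. -/
open PowerSeries

def EH.ZS : Subring ℚ := (Int.castRingHom ℚ).range

lemma EH.ZS_def (q : ℚ) : q ∈ EH.ZS ↔ ∃ m : ℤ, (m : ℚ) = q := Iff.rfl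

lemma EH.intCast_mem (m : ℤ) : (m : ℚ) ∈ EH.ZS := ⟨m, rfl⟩

lemma EH.natCast_mem (m : ℕ) : (m : ℚ) ∈ EH.ZS := ⟨m, by simp⟩

lemma EH.den_dvd_mem {q : ℚ} {m : ℕ} (h : q.den ∣ m) : (m : ℚ) * q ∈ EH.ZS := by
  obtain ⟨k, hk⟩ := h
  refine ⟨k * q.num, ?_⟩
  have h1 : (q.den : ℚ) * q = q.num := by
    rw [mul_comm]; exact_mod_cast Rat.mul_den_eq_num q
  show ((k * q.num : ℤ) : ℚ) = _
  push_cast [hk]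
  rw [mul_comm (q.den : ℚ) k, mul_assoc, h1]

noncomputable def EH.Sr : Subring (PowerSeries ℚ) where
  carrier := {f | ∀ n, PowerSeries.coeff n f ∈ EH.ZS}
  zero_mem' := fun n => by rw [map_zero]; exact zero_mem _
  one_mem' := fun n => by
    rw [PowerSeries.coeff_one]
    split <;> [exact one_mem _; exact zero_mem _]
  add_mem' := fun {a b} ha hb n => by
    rw [map_add]; exact add_mem (ha n) (hb n)
  neg_mem' := fun {a} ha n => by rw [map_neg]; exact neg_mem (ha n)
  mul_mem' := fun {a b} ha hb n => by
    rw [PowerSeries.coeff_mul]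
    exact Subring.sum_mem _ fun p _ => mul_mem (ha p.1) (hb p.2)

lemma EH.mem_Sr {f : PowerSeries ℚ} :
    f ∈ EH.Sr ↔ ∀ n, PowerSeries.coeff n f ∈ EH.ZS := Iff.rfl

lemma EH.fp (M : ℕ) (φ0 : PowerSeries ℚ) (ψ : ℕ → PowerSeries ℚ) (H : PowerSeries ℚ)
    (h0 : φ0 ∈ EH.Sr) (hψ : ∀ i ∈ Finset.range M, ψ i ∈ EH.Sr)
    (heq : H = φ0 + (PowerSeries.X : PowerSeries ℚ) * ∑ i ∈ Finset.range M, ψ i * H ^ i) :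
    H ∈ EH.Sr := by
  rw [EH.mem_Sr]
  intro n
  induction n using Nat.strong_induction_on with
  | _ n ih =>
    cases n with
    | zero =>
      rw [heq, map_add, coeff_zero_X_mul, add_zero]
      exact h0 0
    | succ m =>
      set T : PowerSeries ℚ := ((trunc (m+1) H : Polynomial ℚ) : PowerSeries ℚ) with hTdef
      have hTS : T ∈ EH.Sr := by
        rw [EH.mem_Sr]
        intro j
        rw [hTdef, Polynomial.coeff_coe, coeff_trunc]
        split
        · exact ih j (by omega)
        · exact zero_mem _
      have hdvd : (PowerSeries.X : PowerSeries ℚ)^(m+1) ∣ H - T := by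
        rw [PowerSeries.X_pow_dvd_iff]
        intro d hd
        rw [map_sub, hTdef, Polynomial.coeff_coe, coeff_trunc, if_pos hd, sub_self]
      have key : ∀ i, PowerSeries.coeff m (ψ i * H ^ i) =
          PowerSeries.coeff m (ψ i * T ^ i) := by
        intro i
        have hdvd2 : (PowerSeries.X : PowerSeries ℚ)^(m+1) ∣ H ^ i - T ^ i :=
          dvd_trans hdvd (sub_dvd_pow_sub_pow H T i)
        obtain ⟨k, hk⟩ := hdvd2
        have h2 : PowerSeries.coeff m (ψ i * (H ^ i - T ^ i)) = 0 := by
          rw [hk, mul_comm (ψ i), mul_assoc, PowerSeries.coeff_X_pow_mul', if_neg (by omega)]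
        rw [mul_sub, map_sub, sub_eq_zero] at h2
        exact h2
      rw [heq, map_add, coeff_succ_X_mul, map_sum]
      refine add_mem (h0 _) (Subring.sum_mem _ fun i hi => ?_)
      rw [key i]
      exact (Subring.mul_mem _ (hψ i hi) (pow_mem hTS i)) m

lemma EH.hasseDeriv_map {R S : Type*} [CommSemiring R] [CommSemiring S] (f : R →+* S)
    (p : Polynomial R) (k : ℕ) :
    Polynomial.hasseDeriv k (p.map f) = (Polynomial.hasseDeriv k p).map f := by
  ext n
  simp [Polynomial.hasseDeriv_coeff, Polynomial.coeff_map]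

lemma EH.taylor_expand (P : Polynomial (Polynomial ℚ)) (F G : PowerSeries ℚ) (S : Polynomial ℚ)
    (s : ℕ)
    (hF : F = (S : PowerSeries ℚ) + (PowerSeries.X : PowerSeries ℚ)^s * G)
    (hP : Polynomial.eval₂ Polynomial.coeToPowerSeries.ringHom F P = 0) :
    ∑ i ∈ Finset.range (P.natDegree + 1),
      (((Polynomial.hasseDeriv i P).eval S : Polynomial ℚ) : PowerSeries ℚ) *
        ((PowerSeries.X : PowerSeries ℚ)^s * G)^i = 0 := by
  set φ := Polynomial.coeToPowerSeries.ringHom (R := ℚ)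
  have h1 : (P.map φ).eval F = 0 := by rw [Polynomial.eval_map]; exact hP
  rw [hF, add_comm] at h1
  have h2 : (Polynomial.taylor ((S : PowerSeries ℚ)) (P.map φ)).eval
      ((PowerSeries.X : PowerSeries ℚ)^s * G) = 0 := by
    rw [Polynomial.taylor_eval]; exact h1
  have h3 : (Polynomial.taylor ((S : PowerSeries ℚ)) (P.map φ)).natDegree < P.natDegree + 1 := by
    rw [Polynomial.natDegree_taylor]
    exact lt_of_le_of_lt Polynomial.natDegree_map_le (lt_add_one _)
  rw [Polynomial.eval_eq_sum_range' h3] at h2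
  rw [← h2]
  refine Finset.sum_congr rfl fun i _ => ?_
  congr 1
  rw [Polynomial.taylor_coeff, EH.hasseDeriv_map, Polynomial.eval_map]
  show (((Polynomial.hasseDeriv i P).eval S : Polynomial ℚ) : PowerSeries ℚ) = _
  have : ((S : Polynomial ℚ) : PowerSeries ℚ) = φ S := rfl
  rw [this, Polynomial.eval₂_at_apply]
  rfl

lemma EH.rescale_C (a b : ℚ) :
    PowerSeries.rescale a (PowerSeries.C b) = PowerSeries.C b := by
  ext n
  rw [PowerSeries.coeff_rescale, PowerSeries.coeff_C]
  split_ifs with h <;> simp [h]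

lemma EH.rescale_X_pow (a : ℚ) (k : ℕ) :
    PowerSeries.rescale a ((PowerSeries.X : PowerSeries ℚ)^k) =
      PowerSeries.C (a^k) * (PowerSeries.X : PowerSeries ℚ)^k := by
  ext n
  rw [PowerSeries.coeff_rescale, PowerSeries.coeff_C_mul, PowerSeries.coeff_X_pow]
  split_ifs with h <;> simp [h]

lemma EH.rescale_X (a : ℚ) :
    PowerSeries.rescale a (PowerSeries.X : PowerSeries ℚ) =
      PowerSeries.C a * PowerSeries.X := by
  have := EH.rescale_X_pow a 1
  simpa using this

lemma EH.fp2 (M : ℕ) (u c : ℚ) (hu : u ≠ 0) (hc : c ≠ 0)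
    (φ0 : PowerSeries ℚ) (ψ : ℕ → PowerSeries ℚ) (H : PowerSeries ℚ)
    (h0 : PowerSeries.C (c * u⁻¹) * φ0 ∈ EH.Sr)
    (hψ : ∀ i ∈ Finset.range M, PowerSeries.C (c * u⁻¹ * (c⁻¹)^i) * ψ i ∈ EH.Sr)
    (heq : PowerSeries.C u * H =
      φ0 + (PowerSeries.X : PowerSeries ℚ) * ∑ i ∈ Finset.range M, ψ i * H ^ i) :
    PowerSeries.C c * H ∈ EH.Sr := by
  apply EH.fp M (PowerSeries.C (c * u⁻¹) * φ0)
    (fun i => PowerSeries.C (c * u⁻¹ * (c⁻¹)^i) * ψ i) (PowerSeries.C c * H) h0 hψ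
  have h1 : PowerSeries.C c * H = PowerSeries.C (c * u⁻¹) * (PowerSeries.C u * H) := by
    rw [← mul_assoc, ← map_mul]
    congr 2
    field_simp
  conv_lhs => rw [h1, heq]
  rw [mul_add]
  congr 1
  rw [mul_left_comm, Finset.mul_sum]
  congr 1
  refine Finset.sum_congr rfl fun i _ => ?_
  have h2 : c * u⁻¹ * (c⁻¹)^i * c^i = c * u⁻¹ := by
    rw [mul_assoc, ← mul_pow, inv_mul_cancel₀ hc, one_pow, mul_one]
  have h3 : PowerSeries.C (c * u⁻¹ * (c⁻¹)^i) * PowerSeries.C (c^i) =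
      PowerSeries.C (c * u⁻¹) := by rw [← map_mul, h2]
  rw [mul_pow, ← map_pow, ← h3]
  ring

lemma EH.calc1 (c u q : ℚ) (hc : c ≠ 0) (hu : u ≠ 0) (a i : ℕ) (hi : i ≤ a) :
    c * u⁻¹ * (c⁻¹)^i * -(c^a * q) = (-(c^(a-i))) * (c * (q/u)) := by
  have h1 : c^(a-i) * c^i = c^a := by rw [← pow_add]; congr 1; omega
  have h2 : (c⁻¹)^i * c^i = 1 := by rw [← mul_pow, inv_mul_cancel₀ hc, one_pow]
  calc c * u⁻¹ * (c⁻¹)^i * -(c^a * q)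
      = -(c^(a-i)) * (c * (q * u⁻¹)) * ((c⁻¹)^i * c^i) := by rw [← h1]; ring
    _ = (-(c^(a-i))) * (c * (q/u)) := by rw [h2, mul_one, div_eq_mul_inv]

/-- (Eisenstein–Heine) If `Σ aₙ zⁿ ∈ ℚ⟦z⟧` is algebraic over `ℚ(z)`, then there are
positive integers `A` and `C` such that `C · Aⁿ · aₙ` is an integer for all `n`. -/
theorem eisenstein_heine (F : PowerSeries ℚ) (h : IsAlgebraicPS F) :
    ∃ A C : ℕ, 0 < A ∧ 0 < C ∧
      ∀ n : ℕ, ∃ m : ℤ, (m : ℚ) = (C : ℚ) * (A : ℚ) ^ n * PowerSeries.coeff n F := by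
  classical
  set φ := Polynomial.coeToPowerSeries.ringHom (R := ℚ) with hφ
  -- choose minimal-degree annihilating polynomial
  have hex : ∃ n, ∃ P : Polynomial (Polynomial ℚ),
      P ≠ 0 ∧ Polynomial.eval₂ φ F P = 0 ∧ P.natDegree = n := by
    obtain ⟨P, hP0, hPF⟩ := h; exact ⟨P.natDegree, P, hP0, hPF, rfl⟩
  set N := Nat.find hex with hNdef
  obtain ⟨P, hP0, hPF, hPdeg⟩ := Nat.find_spec hex
  rw [← hNdef] at hPdeg
  have hN1 : 1 ≤ N := by
    rcases Nat.eq_zero_or_pos N with h0 | h1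
    · exfalso
      rw [h0] at hPdeg
      have hPC : P = Polynomial.C (P.coeff 0) := Polynomial.eq_C_of_natDegree_eq_zero hPdeg
      rw [hPC, Polynomial.eval₂_C] at hPF
      have : P.coeff 0 = 0 := by
        have := Polynomial.coe_eq_zero_iff.mp hPF
        exact this
      rw [this, map_zero] at hPC
      exact hP0 hPC
    · exact h1
  -- derivative evaluates to a nonzero series
  set D := Polynomial.eval₂ φ F (Polynomial.derivative P) with hDdef
  have hD0 : D ≠ 0 := by
    intro hzero
    have hd0 : Polynomial.derivative P ≠ 0 := by
      intro hd
      have h1 := Polynomial.coeff_derivative P (N - 1)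
      rw [hd] at h1
      have hNN : N - 1 + 1 = N := by omega
      rw [hNN] at h1
      have h2 : P.coeff N ≠ 0 := by
        rw [← hPdeg]
        exact Polynomial.leadingCoeff_ne_zero.mpr hP0
      have h3 : ((N - 1 : ℕ) + 1 : Polynomial ℚ) ≠ 0 := by
        have : (((N - 1 : ℕ) + 1 : ℕ) : Polynomial ℚ) ≠ 0 := Nat.cast_ne_zero.mpr (by omega)
        push_cast at this
        exact this
      simp only [Polynomial.coeff_zero] at h1
      exact (mul_ne_zero h2 h3) h1.symm
    have hlt : (Polynomial.derivative P).natDegree < N := by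
      rw [← hPdeg]
      exact Polynomial.natDegree_derivative_lt (by omega)
    exact Nat.find_min hex hlt ⟨Polynomial.derivative P, hd0, hzero, rfl⟩
  -- the order of D
  have hDex : ∃ n, PowerSeries.coeff n D ≠ 0 := by
    by_contra hcon
    push_neg at hcon
    exact hD0 (PowerSeries.ext fun n => by rw [hcon n, map_zero])
  set hord := Nat.find hDex with hhord
  set u := PowerSeries.coeff hord D with hu_def
  have hu : u ≠ 0 := Nat.find_spec hDex
  have hlow : ∀ j < hord, PowerSeries.coeff j D = 0 := by
    intro j hj
    by_contra hcon
    exact absurd hcon (by simpa using Nat.find_min hDex hj)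
  set s := hord + 1 with hs_def
  set S := PowerSeries.trunc s F with hSdef
  -- write F = S + X^s G
  have hdvdFS : (PowerSeries.X : PowerSeries ℚ)^s ∣ F - (S : PowerSeries ℚ) := by
    rw [PowerSeries.X_pow_dvd_iff]
    intro d hd
    rw [map_sub, hSdef, Polynomial.coeff_coe, PowerSeries.coeff_trunc, if_pos hd, sub_self]
  obtain ⟨G, hG⟩ := hdvdFS
  have hF : F = (S : PowerSeries ℚ) + (PowerSeries.X : PowerSeries ℚ)^s * G := by
    rw [← hG]; ring
  -- the Taylor coefficients
  set γ : ℕ → Polynomial ℚ := fun i => (Polynomial.hasseDeriv i P).eval S with hγdef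
  have hmain : ∑ i ∈ Finset.range (N + 1),
      ((γ i : Polynomial ℚ) : PowerSeries ℚ) *
        ((PowerSeries.X : PowerSeries ℚ)^s * G)^i = 0 := by
    have := EH.taylor_expand P F G S s hF hPF
    rw [hPdeg] at this
    exact this
  have hs : s = hord + 1 := hs_def
  -- γ 1 agrees with D below s
  have hγ1D : (PowerSeries.X : PowerSeries ℚ)^s ∣ ((γ 1 : Polynomial ℚ) : PowerSeries ℚ) - D := by
    have e1 : ((γ 1 : Polynomial ℚ) : PowerSeries ℚ) =
        ((Polynomial.derivative P).map φ).eval ((S : Polynomial ℚ) : PowerSeries ℚ) := by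
      have hγ1 : γ 1 = (Polynomial.derivative P).eval S := by
        rw [hγdef]; simp only [Polynomial.hasseDeriv_one']
      rw [hγ1, Polynomial.eval_map]
      show φ ((Polynomial.derivative P).eval S) = _
      rw [show ((S : Polynomial ℚ) : PowerSeries ℚ) = φ S from rfl, Polynomial.eval₂_at_apply]
    have e2 : D = ((Polynomial.derivative P).map φ).eval F := by
      rw [hDdef, Polynomial.eval_map]
    rw [e1, e2]
    have e3 := Polynomial.sub_dvd_eval_sub ((S : Polynomial ℚ) : PowerSeries ℚ) F
      ((Polynomial.derivative P).map φ)
    have e4 : (PowerSeries.X : PowerSeries ℚ)^s ∣ ((S : Polynomial ℚ) : PowerSeries ℚ) - F :=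
      ⟨-G, by rw [hF]; ring⟩
    exact dvd_trans e4 e3
  have hγ1c : ∀ j < s, PowerSeries.coeff j ((γ 1 : Polynomial ℚ) : PowerSeries ℚ) =
      PowerSeries.coeff j D := by
    intro j hj
    have := (PowerSeries.X_pow_dvd_iff.mp hγ1D) j hj
    rw [map_sub, sub_eq_zero] at this
    exact this
  have hdvdγ1 : (PowerSeries.X : PowerSeries ℚ)^hord ∣ ((γ 1 : Polynomial ℚ) : PowerSeries ℚ) := by
    rw [PowerSeries.X_pow_dvd_iff]
    intro d hd
    rw [hγ1c d (by omega)]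
    exact hlow d hd
  obtain ⟨d1, hd1⟩ := hdvdγ1
  have hd1u : PowerSeries.coeff 0 d1 = u := by
    have h1 := PowerSeries.coeff_X_pow_mul d1 hord 0
    rw [← hd1, zero_add] at h1
    rw [← h1, hγ1c hord (by omega)]
  obtain ⟨f1, hf1⟩ : ∃ f1, d1 = PowerSeries.C u + PowerSeries.X * f1 := by
    have hdv : (PowerSeries.X : PowerSeries ℚ)^1 ∣ d1 - PowerSeries.C u := by
      rw [PowerSeries.X_pow_dvd_iff]
      intro d hd
      interval_cases d
      rw [map_sub, hd1u, PowerSeries.coeff_zero_C, sub_self]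
    obtain ⟨f1, hf1⟩ := hdv
    exact ⟨f1, by rw [pow_one] at hf1; linear_combination hf1⟩
  -- split off the first two terms of the main identity
  set t : ℕ → PowerSeries ℚ :=
    fun i => ((γ i : Polynomial ℚ) : PowerSeries ℚ) *
      ((PowerSeries.X : PowerSeries ℚ)^s * G)^i with htdef
  have hsplit0 : ∑ i ∈ Finset.range (N + 1), t i = t 0 + ∑ i ∈ Finset.Ico 1 (N + 1), t i := by
    rw [Finset.range_eq_Ico, Finset.sum_eq_sum_Ico_succ_bot (by omega)]
  have hdvd0 : (PowerSeries.X : PowerSeries ℚ)^(s + hord) ∣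
      ((γ 0 : Polynomial ℚ) : PowerSeries ℚ) := by
    have ht0 : t 0 = ((γ 0 : Polynomial ℚ) : PowerSeries ℚ) := by
      show ((γ 0 : Polynomial ℚ) : PowerSeries ℚ) * _ ^ 0 = _
      rw [pow_zero, mul_one]
    have hneg : ((γ 0 : Polynomial ℚ) : PowerSeries ℚ) = -∑ i ∈ Finset.Ico 1 (N + 1), t i := by
      rw [← ht0]
      have := hsplit0 ▸ hmain
      linear_combination this
    rw [hneg, dvd_neg]
    apply Finset.dvd_sum
    intro i hi
    rw [Finset.mem_Ico] at hi
    rcases eq_or_lt_of_le hi.1 with h1 | h2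
    · -- i = 1
      rw [← h1]
      refine ⟨d1 * G, ?_⟩
      show ((γ 1 : Polynomial ℚ) : PowerSeries ℚ) * _ = _
      rw [hd1, pow_one, pow_add]
      ring
    · -- 2 ≤ i
      obtain ⟨k, rfl⟩ : ∃ k, i = k + 2 := ⟨i - 2, by omega⟩
      refine ⟨(PowerSeries.X : PowerSeries ℚ)^((k+2-2)*s+1) * ((γ (k+2) : Polynomial ℚ) : PowerSeries ℚ) * G^(k+2), ?_⟩
      show ((γ (k+2) : Polynomial ℚ) : PowerSeries ℚ) * _ = _
      have hexp : s * (k+2) = (s + hord) + ((k+2-2)*s+1) := by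
        have h22 : k + 2 - 2 = k := by omega
        rw [h22, hs]; ring
      rw [mul_pow, ← pow_mul, hexp, pow_add]
      ring
  obtain ⟨d0, hd0eq⟩ := hdvd0
  -- the factored identity
  have hW : d0 + (PowerSeries.C u + PowerSeries.X * f1) * G +
      ∑ i ∈ Finset.Ico 2 (N + 1),
        (PowerSeries.X : PowerSeries ℚ)^((i-2)*s+1) *
          ((γ i : Polynomial ℚ) : PowerSeries ℚ) * G^i = 0 := by
    have hX : ((PowerSeries.X : PowerSeries ℚ))^(s + hord) ≠ 0 :=
      pow_ne_zero _ PowerSeries.X_ne_zero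
    apply mul_left_cancel₀ hX
    rw [mul_zero, ← hmain, hsplit0, Finset.sum_eq_sum_Ico_succ_bot (show 1 < N + 1 by omega)]
    have e0 : t 0 = (PowerSeries.X : PowerSeries ℚ)^(s + hord) * d0 := by
      show ((γ 0 : Polynomial ℚ) : PowerSeries ℚ) * _ ^ 0 = _
      rw [pow_zero, mul_one, hd0eq]
    have e1 : t 1 = (PowerSeries.X : PowerSeries ℚ)^(s + hord) *
        ((PowerSeries.C u + PowerSeries.X * f1) * G) := by
      show ((γ 1 : Polynomial ℚ) : PowerSeries ℚ) * _ = _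
      rw [hd1, hf1, pow_one, pow_add]
      ring
    have e2 : ∑ i ∈ Finset.Ico 2 (N + 1), t i =
        (PowerSeries.X : PowerSeries ℚ)^(s + hord) *
          ∑ i ∈ Finset.Ico 2 (N + 1),
            (PowerSeries.X : PowerSeries ℚ)^((i-2)*s+1) *
              ((γ i : Polynomial ℚ) : PowerSeries ℚ) * G^i := by
      rw [Finset.mul_sum]
      refine Finset.sum_congr rfl fun i hi => ?_
      rw [Finset.mem_Ico] at hi
      obtain ⟨k, rfl⟩ : ∃ k, i = k + 2 := ⟨i - 2, by omega⟩
      show ((γ (k+2) : Polynomial ℚ) : PowerSeries ℚ) * _ = _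
      have hexp : s * (k+2) = (s + hord) + ((k+2-2)*s+1) := by
        have h22 : k + 2 - 2 = k := by omega
        rw [h22, hs]; ring
      rw [mul_pow, ← pow_mul, hexp, pow_add]
      ring
    rw [e0, e1, e2]
    ring
  -- rearranged fixed-point equation for G
  have hGeq : PowerSeries.C u * G =
      -d0 - PowerSeries.X * (f1 * G) - PowerSeries.X *
        ∑ i ∈ Finset.Ico 2 (N + 1),
          (PowerSeries.X : PowerSeries ℚ)^((i-2)*s) *
            ((γ i : Polynomial ℚ) : PowerSeries ℚ) * G^i := by
    have hsum : ∑ i ∈ Finset.Ico 2 (N + 1),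
        (PowerSeries.X : PowerSeries ℚ)^((i-2)*s+1) *
          ((γ i : Polynomial ℚ) : PowerSeries ℚ) * G^i =
        PowerSeries.X * ∑ i ∈ Finset.Ico 2 (N + 1),
          (PowerSeries.X : PowerSeries ℚ)^((i-2)*s) *
            ((γ i : Polynomial ℚ) : PowerSeries ℚ) * G^i := by
      rw [Finset.mul_sum]
      refine Finset.sum_congr rfl fun i hi => ?_
      rw [pow_add, pow_one]
      ring
    rw [hsum] at hW
    linear_combination hW
  -- denominators
  set c : ℕ := ∏ i ∈ Finset.range (N+1), ∏ k ∈ Finset.range ((γ i).natDegree + 1),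
      (((γ i).coeff k) / u).den with hcdef
  have hcpos : 0 < c :=
    Finset.prod_pos fun i _ => Finset.prod_pos fun k _ => (((γ i).coeff k) / u).den_pos
  have hcne : (c : ℚ) ≠ 0 := Nat.cast_ne_zero.mpr (by omega)
  have hcd : ∀ i ≤ N, ∀ k, ((c : ℚ) * (((γ i).coeff k) / u)) ∈ EH.ZS := by
    intro i hi k
    by_cases hk : k ≤ (γ i).natDegree
    · apply EH.den_dvd_mem
      rw [hcdef]
      exact dvd_trans
        (Finset.dvd_prod_of_mem (fun k => (((γ i).coeff k)/u).den)
          (Finset.mem_range.mpr (by omega : k < (γ i).natDegree + 1)))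
        (Finset.dvd_prod_of_mem
          (fun j => ∏ k ∈ Finset.range ((γ j).natDegree + 1), (((γ j).coeff k)/u).den)
          (Finset.mem_range.mpr (by omega : i < N + 1)))
    · rw [Polynomial.coeff_eq_zero_of_natDegree_lt (by omega), zero_div, mul_zero]
      exact zero_mem _
  set B : ℕ := c ^ N with hBdef
  have hBpos : 0 < B := pow_pos hcpos N
  set ρ : PowerSeries ℚ →+* PowerSeries ℚ := PowerSeries.rescale (B : ℚ) with hρ
  have hresc := congrArg ρ hGeq
  simp only [hρ, map_mul, map_sub, map_neg, map_sum, map_pow, EH.rescale_C,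
    EH.rescale_X_pow, EH.rescale_X] at hresc
  -- hresc : C u * ρ G = -ρ d0 - C B * X * (ρ f1 * ρ G)
  --   - C B * X * ∑ x ∈ Ico 2 (N+1), (C B * X)^((x-2)*s) * ρ ↑(γ x) * (ρ G)^x
  set Ψ : ℕ → PowerSeries ℚ := fun i =>
    if i = 0 then 0
    else if i = 1 then -(PowerSeries.C (B : ℚ) * ρ f1)
    else -(PowerSeries.C (B : ℚ) * (PowerSeries.C (B : ℚ) * PowerSeries.X)^((i-2)*s) *
      ρ ((γ i : Polynomial ℚ) : PowerSeries ℚ)) with hΨdef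
  have hΨ0 : Ψ 0 = 0 := rfl
  have hΨ1 : Ψ 1 = -(PowerSeries.C (B : ℚ) * ρ f1) := rfl
  have hΨ2 : ∀ i, 2 ≤ i → Ψ i =
      -(PowerSeries.C (B : ℚ) * (PowerSeries.C (B : ℚ) * PowerSeries.X)^((i-2)*s) *
        ρ ((γ i : Polynomial ℚ) : PowerSeries ℚ)) := by
    intro i hi
    rw [hΨdef]
    simp only [if_neg (by omega : ¬ i = 0), if_neg (by omega : ¬ i = 1)]
  have e2 : (PowerSeries.X : PowerSeries ℚ) * ∑ i ∈ Finset.Ico 2 (N+1), Ψ i * (ρ G)^i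
      = -(PowerSeries.C (B : ℚ) * PowerSeries.X *
          ∑ x ∈ Finset.Ico 2 (N + 1),
            (PowerSeries.C (B : ℚ) * PowerSeries.X) ^ ((x - 2) * s) *
              ρ ((γ x : Polynomial ℚ) : PowerSeries ℚ) * (ρ G) ^ x) := by
    rw [Finset.mul_sum, Finset.mul_sum, ← Finset.sum_neg_distrib]
    refine Finset.sum_congr rfl fun i hi => ?_
    rw [Finset.mem_Ico] at hi
    rw [hΨ2 i hi.1]
    ring
  have heq2 : PowerSeries.C u * ρ G =
      (-(ρ d0)) + (PowerSeries.X : PowerSeries ℚ) *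
        ∑ i ∈ Finset.range (N+1), Ψ i * (ρ G)^i := by
    rw [Finset.range_eq_Ico,
      Finset.sum_eq_sum_Ico_succ_bot (by omega : 0 < N+1),
      Finset.sum_eq_sum_Ico_succ_bot (by omega : 1 < N+1),
      hΨ0, hΨ1, zero_mul, zero_add, mul_add, e2, pow_one, hresc]
    ring
  -- auxiliary coefficient facts
  have hcpow : ∀ e : ℕ, ((c:ℚ)^e) ∈ EH.ZS := fun e => by
    have he : ((c:ℚ)^e) = ((c^e : ℕ) : ℚ) := by push_cast; ring
    rw [he]; exact EH.natCast_mem _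
  have hBcast : ((B:ℕ):ℚ) = (c:ℚ)^N := by rw [hBdef]; push_cast; ring
  have hρc : ∀ (f : PowerSeries ℚ) (n : ℕ),
      PowerSeries.coeff n (ρ f) = ((B:ℕ):ℚ)^n * PowerSeries.coeff n f := by
    intro f n; rw [hρ]; exact PowerSeries.coeff_rescale f _ n
  have hd0c : ∀ n, PowerSeries.coeff n d0 = (γ 0).coeff (n + (s + hord)) := by
    intro n
    have h1 := PowerSeries.coeff_X_pow_mul d0 (s + hord) n
    rw [← hd0eq, Polynomial.coeff_coe] at h1
    exact h1.symm
  have hf1c : ∀ n, PowerSeries.coeff n f1 = (γ 1).coeff (n + 1 + hord) := by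
    intro n
    have h1 : PowerSeries.coeff (n+1) d1 = PowerSeries.coeff n f1 := by
      rw [hf1, map_add, PowerSeries.coeff_C, if_neg (by omega), zero_add,
        PowerSeries.coeff_succ_X_mul]
    have h2 := PowerSeries.coeff_X_pow_mul d1 hord (n+1)
    rw [← hd1, Polynomial.coeff_coe] at h2
    rw [← h1, ← h2]
  -- integrality of φ0
  have h0m : PowerSeries.C ((c:ℚ) * u⁻¹) * (-(ρ d0)) ∈ EH.Sr := by
    rw [EH.mem_Sr]
    intro n
    rw [PowerSeries.coeff_C_mul, map_neg, hρc, hd0c]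
    have hv : (c:ℚ) * u⁻¹ * -(((B:ℕ):ℚ)^n * (γ 0).coeff (n + (s + hord)))
        = (c:ℚ) * u⁻¹ * ((c:ℚ)⁻¹)^0 * -((c:ℚ)^(N*n) * (γ 0).coeff (n + (s + hord))) := by
      rw [hBcast, ← pow_mul]
      ring
    rw [hv, EH.calc1 _ _ _ hcne hu _ 0 (by omega)]
    exact mul_mem (neg_mem (hcpow _)) (hcd 0 (by omega) _)
  -- integrality of Ψ
  have hψm : ∀ i ∈ Finset.range (N+1),
      PowerSeries.C ((c:ℚ) * u⁻¹ * ((c:ℚ)⁻¹)^i) * Ψ i ∈ EH.Sr := by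
    intro i hi
    rw [Finset.mem_range] at hi
    rcases Nat.lt_or_ge i 2 with h2 | h2
    · interval_cases i
      · rw [hΨ0, mul_zero]; exact zero_mem _
      · rw [hΨ1, EH.mem_Sr]
        intro n
        rw [mul_neg, map_neg, PowerSeries.coeff_C_mul, PowerSeries.coeff_C_mul, hρc, hf1c]
        have ha : 1 ≤ N*(n+1) := Nat.one_le_iff_ne_zero.mpr
          (Nat.mul_ne_zero (by omega) (by omega))
        have he : (c:ℚ)^N * (c:ℚ)^(N*n) = (c:ℚ)^(N*(n+1)) := by
          rw [← pow_add]; congr 1; ring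
        have hv : -((c:ℚ) * u⁻¹ * ((c:ℚ)⁻¹)^1 * (((B:ℕ):ℚ) *
              (((B:ℕ):ℚ)^n * (γ 1).coeff (n + 1 + hord))))
            = (c:ℚ) * u⁻¹ * ((c:ℚ)⁻¹)^1 *
                -((c:ℚ)^(N*(n+1)) * (γ 1).coeff (n + 1 + hord)) := by
          rw [hBcast, ← pow_mul, ← he]; ring
        rw [hv, EH.calc1 _ _ _ hcne hu _ 1 (by omega)]
        exact mul_mem (neg_mem (hcpow _)) (hcd 1 (by omega) _)
    · -- 2 ≤ i ≤ N
      rw [hΨ2 i h2, EH.mem_Sr]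
      intro n
      have hCBX : (PowerSeries.C ((B:ℕ):ℚ) * (PowerSeries.X : PowerSeries ℚ))^((i-2)*s)
          = PowerSeries.C (((B:ℕ):ℚ)^((i-2)*s)) * (PowerSeries.X : PowerSeries ℚ)^((i-2)*s) := by
        rw [mul_pow, ← map_pow]
      rw [mul_neg, map_neg, hCBX]
      rw [show PowerSeries.C ((B:ℕ):ℚ) *
            (PowerSeries.C (((B:ℕ):ℚ)^((i-2)*s)) * (PowerSeries.X : PowerSeries ℚ)^((i-2)*s)) *
            ρ ((γ i : Polynomial ℚ) : PowerSeries ℚ)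
          = PowerSeries.C ((B:ℕ):ℚ) * (PowerSeries.C (((B:ℕ):ℚ)^((i-2)*s)) *
              ((PowerSeries.X : PowerSeries ℚ)^((i-2)*s) *
                ρ ((γ i : Polynomial ℚ) : PowerSeries ℚ))) from by ring]
      rw [PowerSeries.coeff_C_mul, PowerSeries.coeff_C_mul, PowerSeries.coeff_C_mul,
        PowerSeries.coeff_X_pow_mul']
      by_cases hmn : (i-2)*s ≤ n
      · rw [if_pos hmn]
        obtain ⟨j, hj⟩ : ∃ j, n = (i-2)*s + j := ⟨n - (i-2)*s, by omega⟩
        subst hj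
        rw [hρc]
        have hje : (i-2)*s + j - (i-2)*s = j := by omega
        rw [hje, Polynomial.coeff_coe]
        have he : (c:ℚ)^N * ((c:ℚ)^(N*((i-2)*s)) * (c:ℚ)^(N*j))
            = (c:ℚ)^(N*(((i-2)*s+j)+1)) := by
          rw [← pow_add, ← pow_add]; congr 1; ring
        have hv : -((c:ℚ) * u⁻¹ * ((c:ℚ)⁻¹)^i * (((B:ℕ):ℚ) * ((((B:ℕ):ℚ)^((i-2)*s)) *
              (((B:ℕ):ℚ)^j * (γ i).coeff j))))
            = (c:ℚ) * u⁻¹ * ((c:ℚ)⁻¹)^i *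
                -((c:ℚ)^(N*(((i-2)*s+j)+1)) * (γ i).coeff j) := by
          rw [hBcast, ← pow_mul, ← pow_mul, ← he]; ring
        rw [hv, EH.calc1 _ _ _ hcne hu _ i
          (le_trans (by omega) (Nat.le_mul_of_pos_right N (by omega)))]
        exact mul_mem (neg_mem (hcpow _)) (hcd i (by omega) _)
      · rw [if_neg hmn]
        simp only [mul_zero, neg_zero]
        exact zero_mem _
  -- apply the fixed point lemma
  have hH := EH.fp2 (N+1) u (c:ℚ) hu hcne (-(ρ d0)) Ψ (ρ G) h0m hψm heq2
  rw [EH.mem_Sr] at hH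
  have hHc : ∀ n, ((c:ℚ) * (((B:ℕ):ℚ)^n * PowerSeries.coeff n G)) ∈ EH.ZS := by
    intro n
    have hn := hH n
    rwa [PowerSeries.coeff_C_mul, hρc] at hn
  -- common denominator of the first s coefficients
  set d : ℕ := ∏ j ∈ Finset.range s, (PowerSeries.coeff j F).den with hddef
  have hdpos : 0 < d := Finset.prod_pos fun j _ => (PowerSeries.coeff j F).den_pos
  refine ⟨B, c * d * B^s, hBpos, by positivity, ?_⟩
  intro n
  have goalmem : ((c * d * B^s : ℕ) : ℚ) * ((B:ℕ):ℚ)^n * PowerSeries.coeff n F ∈ EH.ZS := by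
    by_cases hn : n < s
    · have hden : (PowerSeries.coeff n F).den ∣ d := by
        rw [hddef]
        exact Finset.dvd_prod_of_mem _ (Finset.mem_range.mpr hn)
      have hv : ((c * d * B^s : ℕ) : ℚ) * ((B:ℕ):ℚ)^n * PowerSeries.coeff n F
          = ((c * B^s * B^n : ℕ) : ℚ) * ((d:ℚ) * PowerSeries.coeff n F) := by
        push_cast; ring
      rw [hv]
      exact mul_mem (EH.natCast_mem _) (EH.den_dvd_mem hden)
    · push_neg at hn
      obtain ⟨j, rfl⟩ : ∃ j, n = s + j := ⟨n - s, by omega⟩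
      have e0 : PowerSeries.coeff (s+j) ((S : Polynomial ℚ) : PowerSeries ℚ) = 0 := by
        rw [Polynomial.coeff_coe, hSdef, PowerSeries.coeff_trunc, if_neg (by omega)]
      have e2' : PowerSeries.coeff (s+j) ((PowerSeries.X : PowerSeries ℚ)^s * G)
          = PowerSeries.coeff j G := by
        rw [show s + j = j + s by omega]
        exact PowerSeries.coeff_X_pow_mul G s j
      have hcoefF : PowerSeries.coeff (s + j) F = PowerSeries.coeff j G := by
        rw [hF, map_add, e0, e2', zero_add]
      rw [hcoefF]
      have hv : ((c * d * B^s : ℕ) : ℚ) * ((B:ℕ):ℚ)^(s+j) * PowerSeries.coeff j G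
          = ((d * B^(2*s) : ℕ) : ℚ) * ((c:ℚ) * (((B:ℕ):ℚ)^j * PowerSeries.coeff j G)) := by
        push_cast; ring
      rw [hv]
      exact mul_mem (EH.natCast_mem _) (hHc j)
  rw [EH.ZS_def] at goalmem
  obtain ⟨m, hm⟩ := goalmem
  exact ⟨m, hm⟩
end

section
/- Let A = Σ aₙ zⁿ ∈ ℚ⟦z⟧ be a formal power series with rational coefficients of finite Hadamard grade over ℚ. Then there are only finitely many primes dividing at least one of the denominators of the aₙ: there exists a finite set S of primes such that for every n, every prime divisor of the denominator of aₙ (in lowest terms) belongs to S. -/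
open PowerSeries

private lemma prod_den_dvd {α : Type*} (s : Finset α) (f : α → ℚ) :
    (∏ i ∈ s, f i).den ∣ ∏ i ∈ s, (f i).den := by
  classical
  induction s using Finset.cons_induction with
  | empty => simp
  | cons a s ha ih =>
      rw [Finset.prod_cons, Finset.prod_cons]
      exact (Rat.mul_den_dvd _ _).trans (mul_dvd_mul dvd_rfl ih)

/-- Eisenstein's theorem: the denominators of the coefficients of an algebraic power
series over `ℚ` involve only finitely many primes. -/
private lemma eisenstein (A : PowerSeries ℚ) (hA : IsAlgebraicPS A) :
    ∃ N : ℕ, N ≠ 0 ∧ ∀ n : ℕ, ∀ p : ℕ, p.Prime →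
      p ∣ (PowerSeries.coeff n A).den → p ∣ N := by
  classical
  set φ : Polynomial ℚ →+* PowerSeries ℚ := Polynomial.coeToPowerSeries.ringHom with hφ
  have hex : ∃ m : ℕ, ∃ P : Polynomial (Polynomial ℚ), P ≠ 0 ∧
      Polynomial.eval₂ φ A P = 0 ∧ P.natDegree = m := by
    obtain ⟨P, h1, h2⟩ := hA
    exact ⟨P.natDegree, P, h1, h2, rfl⟩
  obtain ⟨P, hP0, hPA, hPdeg⟩ := Nat.find_spec hex
  have hdeg : P.natDegree ≠ 0 := by
    intro hd
    have hC := Polynomial.eq_C_of_natDegree_eq_zero hd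
    rw [hC, Polynomial.eval₂_C] at hPA
    have h0 : P.coeff 0 = 0 := by
      rw [hφ, Polynomial.coeToPowerSeries.ringHom_apply, Polynomial.coe_eq_zero_iff] at hPA
      exact hPA
    rw [hC, h0, map_zero] at hP0
    exact hP0 rfl
  have hD0 : P.derivative ≠ 0 := fun hcon =>
    hdeg (Polynomial.natDegree_eq_zero_of_derivative_eq_zero hcon)
  have hDA : Polynomial.eval₂ φ A P.derivative ≠ 0 := by
    intro hcon
    have hlt : P.derivative.natDegree < Nat.find hex := by
      rw [← hPdeg]
      exact Polynomial.natDegree_derivative_lt hdeg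
    exact Nat.find_min hex hlt ⟨P.derivative, hD0, hcon, rfl⟩
  set F : Polynomial (PowerSeries ℚ) := P.map φ with hF
  have hFA : F.eval A = 0 := by rw [hF, Polynomial.eval_map]; exact hPA
  set B : PowerSeries ℚ := F.derivative.eval A with hB
  have hBne : B ≠ 0 := by
    rw [hB, hF, Polynomial.derivative_map, Polynomial.eval_map]
    exact hDA
  have hkex : ∃ k, PowerSeries.coeff k B ≠ 0 := by
    by_contra hcon
    push_neg at hcon
    exact hBne (PowerSeries.ext fun j => by simpa using hcon j)
  set k := Nat.find hkex with hk
  set c : ℚ := PowerSeries.coeff k B with hcdef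
  have hc : c ≠ 0 := Nat.find_spec hkex
  have hlow : ∀ i < k, PowerSeries.coeff i B = 0 := fun i hi => by
    simpa using Nat.find_min hkex hi
  set s : Finset ℚ :=
    insert c⁻¹ (((Finset.range (k + 1)).image fun j => PowerSeries.coeff j A) ∪
      P.support.biUnion fun j => (P.coeff j).support.image fun i => (P.coeff j).coeff i)
    with hs
  set N : ℕ := ∏ q ∈ s, q.den with hNdef
  have hN0 : N ≠ 0 := Finset.prod_ne_zero_iff.mpr fun q _ => q.den_nz
  set Ok : ℚ → Prop := fun x => ∀ p : ℕ, p.Prime → p ∣ x.den → p ∣ N with hOk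
  have hOk_mem : ∀ q ∈ s, Ok q := fun q hq p _ hpd =>
    hpd.trans (Finset.dvd_prod_of_mem _ hq)
  have ok_den_one : ∀ x : ℚ, x.den = 1 → Ok x := fun x hx p hp hpd => by
    rw [hx, Nat.dvd_one] at hpd
    exact absurd hpd hp.ne_one
  have ok_zero : Ok 0 := ok_den_one 0 rfl
  have ok_one : Ok 1 := ok_den_one 1 rfl
  have ok_add : ∀ x y, Ok x → Ok y → Ok (x + y) := fun x y hx hy p hp hpd => by
    rcases (Nat.Prime.dvd_mul hp).mp (hpd.trans (Rat.add_den_dvd x y)) with hcase | hcase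
    exacts [hx p hp hcase, hy p hp hcase]
  have ok_mul : ∀ x y, Ok x → Ok y → Ok (x * y) := fun x y hx hy p hp hpd => by
    rcases (Nat.Prime.dvd_mul hp).mp (hpd.trans (Rat.mul_den_dvd x y)) with hcase | hcase
    exacts [hx p hp hcase, hy p hp hcase]
  have ok_neg : ∀ x, Ok x → Ok (-x) := fun x hx p hp hpd =>
    hx p hp (by rwa [Rat.neg_den] at hpd)
  have ok_sum : ∀ {α : Type} (t : Finset α) (f : α → ℚ),
      (∀ a ∈ t, Ok (f a)) → Ok (∑ a ∈ t, f a) := by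
    intro α t f hf
    induction t using Finset.cons_induction with
    | empty => simpa using ok_zero
    | cons a t ha ih =>
        rw [Finset.sum_cons]
        exact ok_add _ _ (hf a (Finset.mem_cons_self a t))
          (ih fun b hb => hf b (Finset.mem_cons_of_mem hb))
  set SR : Subring (PowerSeries ℚ) :=
    { carrier := {f | ∀ i, Ok (PowerSeries.coeff i f)}
      zero_mem' := fun i => by simpa using ok_zero
      one_mem' := fun i => by
        rw [PowerSeries.coeff_one]
        split
        · exact ok_one
        · exact ok_zero
      add_mem' := fun {a b} ha hb i => by
        rw [map_add]; exact ok_add _ _ (ha i) (hb i)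
      neg_mem' := fun {a} ha i => by
        rw [map_neg]; exact ok_neg _ (ha i)
      mul_mem' := fun {a b} ha hb i => by
        rw [PowerSeries.coeff_mul]
        exact ok_sum _ _ fun x _ => ok_mul _ _ (ha x.1) (hb x.2) } with hSR
  have hcinv : Ok c⁻¹ := hOk_mem c⁻¹ (Finset.mem_insert_self _ _)
  have hPmem : ∀ j, φ (P.coeff j) ∈ SR := by
    intro j i
    rw [hφ, Polynomial.coeToPowerSeries.ringHom_apply, Polynomial.coeff_coe]
    by_cases h0 : (P.coeff j).coeff i = 0
    · rw [h0]; exact ok_zero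
    · have hj : j ∈ P.support := Polynomial.mem_support_iff.mpr fun hcon => by
        rw [hcon] at h0; simp at h0
      have hi : i ∈ (P.coeff j).support := Polynomial.mem_support_iff.mpr h0
      exact hOk_mem _ (Finset.mem_insert_of_mem (Finset.mem_union_right _
        (Finset.mem_biUnion.mpr ⟨j, hj, Finset.mem_image.mpr ⟨i, hi, rfl⟩⟩)))
  have main : ∀ n, Ok (PowerSeries.coeff n A) := by
    intro n
    induction n using Nat.strong_induction_on with
    | _ n IH =>
    by_cases hn : n ≤ k
    · exact hOk_mem _ (Finset.mem_insert_of_mem (Finset.mem_union_left _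
        (Finset.mem_image.mpr ⟨n, Finset.mem_range.mpr (by omega), rfl⟩)))
    · push_neg at hn
      set Xn : PowerSeries ℚ := ((PowerSeries.trunc n A : Polynomial ℚ) : PowerSeries ℚ)
        with hXn
      have hXc : ∀ j, PowerSeries.coeff j Xn =
          if j < n then PowerSeries.coeff j A else 0 := fun j => by
        rw [hXn, Polynomial.coeff_coe, PowerSeries.coeff_trunc]
      set y : PowerSeries ℚ := A - Xn with hy
      have hyc : ∀ j, PowerSeries.coeff j y =
          if j < n then 0 else PowerSeries.coeff j A := fun j => by
        rw [hy, map_sub, hXc]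
        split <;> simp
      have hydvd : (PowerSeries.X : PowerSeries ℚ) ^ n ∣ y :=
        PowerSeries.X_pow_dvd_iff.mpr fun m hm => by rw [hyc]; simp [hm]
      obtain ⟨K, hK⟩ := F.binomExpansion Xn y
      have hXy : Xn + y = A := by rw [hy]; ring
      rw [hXy, hFA] at hK
      have h0 := congrArg (PowerSeries.coeff (n + k)) hK
      rw [map_zero, map_add, map_add] at h0
      have h3 : PowerSeries.coeff (n + k) (K * y ^ 2) = 0 := by
        have hdvd2 : (PowerSeries.X : PowerSeries ℚ) ^ (n + n) ∣ K * y ^ 2 := by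
          rw [pow_add, sq]
          exact Dvd.dvd.mul_left (mul_dvd_mul hydvd hydvd) K
        exact PowerSeries.X_pow_dvd_iff.mp hdvd2 (n + k) (by omega)
      have hDn : ∀ i < n, PowerSeries.coeff i (F.derivative.eval Xn) =
          PowerSeries.coeff i B := by
        intro i hi
        have hdvd : (PowerSeries.X : PowerSeries ℚ) ^ n ∣
            (F.derivative.eval A - F.derivative.eval Xn) :=
          dvd_trans hydvd (Polynomial.sub_dvd_eval_sub A Xn F.derivative)
        have hz := PowerSeries.X_pow_dvd_iff.mp hdvd i hi
        rw [map_sub, sub_eq_zero] at hz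
        rw [← hz, hB]
      have h2 : PowerSeries.coeff (n + k) (F.derivative.eval Xn * y) =
          c * PowerSeries.coeff n A := by
        rw [PowerSeries.coeff_mul]
        rw [Finset.sum_eq_single (k, n)]
        · rw [hDn k (by omega), hyc]
          simp [hcdef]
        · rintro ⟨i, j⟩ hmem hne
          rw [Finset.HasAntidiagonal.mem_antidiagonal] at hmem
          by_cases hj : j < n
          · rw [hyc]; simp [hj]
          · have hik : i ≠ k := by
              intro hcon
              apply hne
              have : j = n := by omega
              simp [hcon, this]
            have hik' : i < k := by omega
            rw [hDn i (by omega), hlow i hik', zero_mul]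
        · intro hnot
          exact absurd (Finset.HasAntidiagonal.mem_antidiagonal.mpr (by omega)) hnot
      have ha : c * PowerSeries.coeff n A =
          -PowerSeries.coeff (n + k) (F.eval Xn) := by
        rw [h2, h3] at h0
        linarith
      have hXmem : Xn ∈ SR := by
        intro j
        rw [hXc]
        split
        · exact IH j (by omega)
        · exact ok_zero
      have hFeval : F.eval Xn ∈ SR := by
        rw [Polynomial.eval_eq_sum_range]
        apply SR.sum_mem
        intro i _
        refine SR.mul_mem ?_ (SR.pow_mem hXmem i)
        rw [hF, Polynomial.coeff_map]
        exact hPmem i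
      have heq : PowerSeries.coeff n A = c⁻¹ * (c * PowerSeries.coeff n A) :=
        (inv_mul_cancel_left₀ hc _).symm
      rw [heq, ha]
      exact ok_mul _ _ hcinv (ok_neg _ (hFeval (n + k)))
  exact ⟨N, hN0, fun n => main n⟩

/-- If `A ∈ ℚ⟦z⟧` has finite Hadamard grade over `ℚ`, then only finitely many primes
divide the denominator of some coefficient of `A`. -/
theorem finitely_many_primes_in_denominators (A : PowerSeries ℚ)
    (h : ∃ d : ℕ, HadamardGradeLe A d) :
    ∃ S : Finset ℕ, ∀ n : ℕ, ∀ p : ℕ, p.Prime →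
      p ∣ (PowerSeries.coeff n A).den → p ∈ S := by
  obtain ⟨d, B, halg, hcoeff⟩ := h
  choose N hN0 hN using fun i => eisenstein (B i) (halg i)
  refine ⟨Finset.univ.biUnion fun i => (N i).divisors, ?_⟩
  intro n p hp hpd
  rw [hcoeff n] at hpd
  have hdvd : p ∣ ∏ i, (PowerSeries.coeff n (B i)).den :=
    hpd.trans (prod_den_dvd _ _)
  obtain ⟨i, _, hi⟩ := (hp.prime.dvd_finset_prod_iff _).mp hdvd
  exact Finset.mem_biUnion.mpr ⟨i, Finset.mem_univ i,
    Nat.mem_divisors.mpr ⟨hN i n p hp hi, hN0 i⟩⟩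
end
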